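/- arXiv:1804.06739 — 5 statements merged into one kernel-verified Lean document; each statement's English description precedes it below -/
import Mathlib

section
/- Let F(w,V) = (1/n)·Σ_{i=1}^n ℓ(wᵀ(x_i + V f(x_i)); y_i) and F_lin(u) = (1/n)·Σ_{i=1}^n ℓ(uᵀx_i; y_i). Then for any w ∈ ℝ^d with w ≠ 0, any V ∈ ℝ^{d×k}, and any u ∈ ℝ^d, it holds that ‖∇F(w,V)‖ ≥ (F(w,V) − F_lin(u)) / √(2‖w‖² + ‖u‖²·(2 + ‖V‖²/‖w‖²)), where ∇F(w,V) denotes the gradient of F with respect to the concatenated vector (w, vec(V)), ‖·‖ on vectors is the Euclidean norm and ‖V‖ is the spectral norm of V. -/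
open scoped RealInnerProductSpace
open Finset

noncomputable section

/-- Euclidean column vectors in `ℝ^d`. -/
abbrev Vec (d : ℕ) : Type := EuclideanSpace ℝ (Fin d)

/-- The concatenated parameter vector `(w, vec(V))`. -/
abbrev Param (d k : ℕ) : Type := EuclideanSpace ℝ (Fin d ⊕ Fin d × Fin k)

/-- Pack `(w, V)` into a single Euclidean vector. -/
def pairWV {d k : ℕ} (w : Vec d) (V : Matrix (Fin d) (Fin k) ℝ) : Param d k :=
  (EuclideanSpace.equiv (Fin d ⊕ Fin d × Fin k) ℝ).symm
    (Sum.elim (fun i => w i) (fun p => V p.1 p.2))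

/-- The residual-network objective `F(w,V) = (1/n)·Σᵢ ℓ(wᵀ(xᵢ + V f(xᵢ)); yᵢ)`,
as a function of the concatenated vector `(w, vec(V))`. -/
def netObj {d k n : ℕ} (ℓ : ℝ → ℝ → ℝ) (f : Vec d → Vec k)
    (x : Fin n → Vec d) (y : Fin n → ℝ) (z : Param d k) : ℝ :=
  (1 / (n : ℝ)) *
    ∑ i, ℓ (∑ j, z (Sum.inl j) * ((x i) j + ∑ l, z (Sum.inr (j, l)) * (f (x i)) l)) (y i)

/-- The linear-predictor objective `F_lin(u) = (1/n)·Σᵢ ℓ(uᵀxᵢ; yᵢ)`. -/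
def linObj {d n : ℕ} (ℓ : ℝ → ℝ → ℝ) (x : Fin n → Vec d) (y : Fin n → ℝ) (u : Vec d) : ℝ :=
  (1 / (n : ℝ)) * ∑ i, ℓ (∑ j, u j * (x i) j) (y i)

/-- Spectral norm of a matrix: the operator norm of the induced map between
Euclidean spaces. -/
def matSpectralNorm {a c : ℕ} (V : Matrix (Fin a) (Fin c) ℝ) : ℝ :=
  ‖LinearMap.toContinuousLinearMap (Matrix.toEuclideanLin V)‖

/-- Tangent-line inequality for convex differentiable functions on `ℝ`. -/
lemma convex_tangent_aux {g : ℝ → ℝ} (hc : ConvexOn ℝ Set.univ g) (hd : Differentiable ℝ g)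
    (p q : ℝ) : g p - g q ≤ deriv g p * (p - q) := by
  rcases lt_trichotomy p q with h | h | h
  · have h2 := hc.deriv_le_slope (Set.mem_univ p) (Set.mem_univ q) h (hd p)
    rw [slope_def_field, le_div_iff₀ (by linarith : (0:ℝ) < q - p)] at h2
    nlinarith
  · simp [h]
  · have h2 := hc.slope_le_of_hasDerivAt (Set.mem_univ q) (Set.mem_univ p) h (hd p).hasDerivAt
    rw [slope_def_field, div_le_iff₀ (by linarith : (0:ℝ) < p - q)] at h2
    linarith

/-- Squared norm in Euclidean space as a sum of squares. -/
lemma euclid_norm_sq_aux {ι : Type*} [Fintype ι] (v : EuclideanSpace ℝ ι) :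
    ‖v‖ ^ 2 = ∑ i, v i * v i := by
  rw [EuclideanSpace.norm_sq_eq]
  exact Finset.sum_congr rfl fun i _ => by rw [Real.norm_eq_abs, sq_abs, sq]

set_option maxHeartbeats 2000000 in
/-- Theorem 1 of the paper. -/
theorem norm_gradient_ge_suboptimality
    {d k n : ℕ} (ℓ : ℝ → ℝ → ℝ) (f : Vec d → Vec k)
    (x : Fin n → Vec d) (y : Fin n → ℝ)
    (hconv : ∀ y₀ : ℝ, ConvexOn ℝ Set.univ fun p => ℓ p y₀)
    (hdiff : ∀ y₀ : ℝ, Differentiable ℝ fun p => ℓ p y₀)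
    (w : Vec d) (hw : w ≠ 0) (V : Matrix (Fin d) (Fin k) ℝ) (u : Vec d) :
    ‖gradient (netObj ℓ f x y) (pairWV w V)‖ ≥
      (netObj ℓ f x y (pairWV w V) - linObj ℓ x y u) /
        Real.sqrt (2 * ‖w‖ ^ 2 + ‖u‖ ^ 2 * (2 + matSpectralNorm V ^ 2 / ‖w‖ ^ 2)) := by
  classical
  have hwpos : (0:ℝ) < ‖w‖ := norm_pos_iff.mpr hw
  have hw2 : (0:ℝ) < ‖w‖ ^ 2 := by positivity
  have hwne : ‖w‖ ≠ 0 := ne_of_gt hwpos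
  set θ : Param d k := pairWV w V with hθdef
  set c : Fin n → Fin k → ℝ := fun i l => f (x i) l with hcdef
  set s : Vec k := WithLp.toLp 2 (fun l => ∑ m, u m * V m l : Fin k → ℝ) with hsdef
  set B : Matrix (Fin d) (Fin k) ℝ := fun j l => w j * s l / ‖w‖ ^ 2 with hBdef
  set z : Param d k := pairWV (w - u) B with hzdef
  have hwsum : ∑ j, w j * w j = ‖w‖ ^ 2 := (euclid_norm_sq_aux w).symm
  -- coordinate facts
  have hθ1 : ∀ j, θ (Sum.inl j) = w j := fun _ => rfl
  have hθ2 : ∀ j l, θ (Sum.inr (j, l)) = V j l := fun _ _ => rfl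
  have hz1 : ∀ j, z (Sum.inl j) = w j - u j := fun _ => rfl
  have hz2 : ∀ j l, z (Sum.inr (j, l)) = B j l := fun _ _ => rfl
  -- the inner functions and their derivatives
  set G : Fin n → Param d k → ℝ := fun i z' =>
    ∑ j, z' (Sum.inl j) * (x i j + ∑ l, z' (Sum.inr (j, l)) * c i l) with hG
  set D : Fin n → (Param d k →L[ℝ] ℝ) := fun i => ∑ j,
      (θ (Sum.inl j) • ((0 : Param d k →L[ℝ] ℝ) +
          ∑ l, c i l • EuclideanSpace.proj (Sum.inr (j, l)))
        + (x i j + ∑ l, θ (Sum.inr (j, l)) * c i l) • EuclideanSpace.proj (Sum.inl j)) with hD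
  have hGd : ∀ i, HasFDerivAt (G i) (D i) θ := by
    intro i
    apply HasFDerivAt.fun_sum
    intro j _
    have h1 : HasFDerivAt (fun z' : Param d k => z' (Sum.inl j))
        ((EuclideanSpace.proj (Sum.inl j) : Param d k →L[ℝ] ℝ)) θ := by
      have := (EuclideanSpace.proj (Sum.inl j) : Param d k →L[ℝ] ℝ).hasFDerivAt (x := θ)
      exact this
    have h2 : ∀ (p : Fin d ⊕ Fin d × Fin k) (a : ℝ),
        HasFDerivAt (fun z' : Param d k => z' p * a)
          (a • (EuclideanSpace.proj p : Param d k →L[ℝ] ℝ)) θ :=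
      fun p a => by
        have := ((EuclideanSpace.proj p : Param d k →L[ℝ] ℝ).hasFDerivAt (x := θ)).mul_const a
        exact this
    exact h1.mul ((hasFDerivAt_const (x i j) θ).add
        (HasFDerivAt.fun_sum fun l _ => h2 (Sum.inr (j, l)) (c i l)))
  set ld : Fin n → ℝ := fun i => deriv (fun p => ℓ p (y i)) (G i θ) with hld
  have hnet : HasFDerivAt (fun z' => (1/(n:ℝ)) * ∑ i, ℓ (G i z') (y i))
      ((1/(n:ℝ)) • ∑ i, ld i • D i) θ := by
    refine HasFDerivAt.const_mul ?_ _
    refine HasFDerivAt.fun_sum fun i _ => ?_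
    exact
      HasDerivAt.comp_hasFDerivAt θ ((hdiff (y i) (G i θ)).hasDerivAt) (hGd i)
  have hobj : netObj ℓ f x y = fun z' => (1/(n:ℝ)) * ∑ i, ℓ (G i z') (y i) := rfl
  have hgrad : ⟪gradient (netObj ℓ f x y) θ, z⟫ = (1/(n:ℝ)) * ∑ i, ld i * (D i z) := by
    rw [hobj]
    unfold gradient
    rw [InnerProductSpace.toDual_symm_apply, hnet.fderiv]
    simp [ContinuousLinearMap.sum_apply, mul_comm]
  -- explicit evaluation of the directional derivative
  have hDz : ∀ i, D i z = ∑ j, (w j * (∑ l, c i l * B j l)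
      + (x i j + ∑ l, V j l * c i l) * (w j - u j)) := by
    intro i
    simp only [hD, ContinuousLinearMap.sum_apply, ContinuousLinearMap.add_apply,
      ContinuousLinearMap.smul_apply, ContinuousLinearMap.zero_apply, smul_eq_mul,
      PiLp.proj_apply, hz1, hz2, hθ1, hθ2, zero_add]
  -- key algebraic identity
  have hBsum : ∀ i, ∑ j, w j * (∑ l, c i l * B j l) = ∑ j, u j * (∑ l, V j l * c i l) := by
    intro i
    calc ∑ j, w j * (∑ l, c i l * B j l)
        = ∑ j, ∑ l, (w j * w j) * (c i l * s l / ‖w‖ ^ 2) := by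
          refine sum_congr rfl fun j _ => ?_
          rw [Finset.mul_sum]
          refine sum_congr rfl fun l _ => ?_
          simp only [hBdef]
          field_simp
      _ = (∑ j, w j * w j) * ∑ l, c i l * s l / ‖w‖ ^ 2 := (Finset.sum_mul_sum _ _ _ _).symm
      _ = ∑ l, c i l * s l := by
          rw [hwsum, Finset.mul_sum]
          refine sum_congr rfl fun l _ => ?_
          field_simp
      _ = ∑ l, ∑ m, u m * (V m l * c i l) := by
          refine sum_congr rfl fun l _ => ?_
          show c i l * (∑ m, u m * V m l) = _
          rw [Finset.mul_sum]
          exact sum_congr rfl fun m _ => by ring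
      _ = ∑ m, ∑ l, u m * (V m l * c i l) := Finset.sum_comm
      _ = ∑ j, u j * (∑ l, V j l * c i l) := by
          refine sum_congr rfl fun m _ => ?_
          rw [Finset.mul_sum]
  have hkey : ∀ i, G i θ - (∑ j, u j * x i j) = D i z := by
    intro i
    rw [hDz i]
    rw [Finset.sum_add_distrib, hBsum i]
    have hGθ : G i θ = ∑ j, w j * (x i j + ∑ l, V j l * c i l) := by
      simp only [hG, hθ1, hθ2]
    rw [hGθ, ← Finset.sum_sub_distrib, ← Finset.sum_add_distrib]
    exact sum_congr rfl fun j _ => by ring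
  -- the norm bound on z
  have hspec0 : (0:ℝ) ≤ matSpectralNorm V := norm_nonneg _
  have hsnorm : ‖s‖ ≤ matSpectralNorm V * ‖u‖ := by
    set T := LinearMap.toContinuousLinearMap (Matrix.toEuclideanLin V) with hT
    have hTapp : ∀ (v : Vec k) (j : Fin d), (T v) j = ∑ l, V j l * v l := by
      intro v j
      simp [hT, Matrix.toEuclideanLin_apply, Matrix.mulVec, dotProduct]
    have hinner : ⟪T s, u⟫ = ∑ l, s l * s l := by
      calc ⟪T s, u⟫ = ∑ j, (T s) j * u j := by
            simp [PiLp.inner_apply, RCLike.inner_apply, mul_comm]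
        _ = ∑ j, ∑ l, u j * (V j l * s l) := by
            refine sum_congr rfl fun j _ => ?_
            rw [hTapp, Finset.sum_mul]
            exact sum_congr rfl fun l _ => by ring
        _ = ∑ l, ∑ j, u j * (V j l * s l) := Finset.sum_comm
        _ = ∑ l, s l * s l := by
            refine sum_congr rfl fun l _ => ?_
            have : s l = ∑ m, u m * V m l := rfl
            calc ∑ j, u j * (V j l * s l) = (∑ j, u j * V j l) * s l := by
                  rw [Finset.sum_mul]; exact sum_congr rfl fun j _ => by ring
              _ = s l * s l := by rw [← this]
    have hkey2 : ‖s‖ ^ 2 ≤ (matSpectralNorm V * ‖s‖) * ‖u‖ := by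
      calc ‖s‖ ^ 2 = ⟪T s, u⟫ := by rw [hinner, euclid_norm_sq_aux]
        _ ≤ ‖T s‖ * ‖u‖ := real_inner_le_norm _ _
        _ ≤ (‖T‖ * ‖s‖) * ‖u‖ :=
            mul_le_mul_of_nonneg_right (T.le_opNorm s) (norm_nonneg u)
        _ = (matSpectralNorm V * ‖s‖) * ‖u‖ := rfl
    rcases eq_or_lt_of_le (norm_nonneg s) with h0 | h0
    · rw [← h0]; positivity
    · nlinarith
  have hzsq : ‖z‖ ^ 2 = ‖w - u‖ ^ 2 + (∑ l, s l * s l) / ‖w‖ ^ 2 := by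
    rw [euclid_norm_sq_aux z, Fintype.sum_sum_type]
    have e1 : ∑ j, z (Sum.inl j) * z (Sum.inl j) = ‖w - u‖ ^ 2 := by
      rw [euclid_norm_sq_aux (w - u)]
      exact sum_congr rfl fun j _ => by rw [hz1]; rfl
    have e2 : ∑ p : Fin d × Fin k, z (Sum.inr p) * z (Sum.inr p)
        = (∑ l, s l * s l) / ‖w‖ ^ 2 := by
      rw [Fintype.sum_prod_type]
      calc ∑ j, ∑ l, z (Sum.inr (j, l)) * z (Sum.inr (j, l))
          = ∑ j, ∑ l, (w j * w j) * (s l * s l / ‖w‖ ^ 4) := by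
            refine sum_congr rfl fun j _ => sum_congr rfl fun l _ => ?_
            rw [hz2]
            simp only [hBdef]
            field_simp
        _ = (∑ j, w j * w j) * ∑ l, s l * s l / ‖w‖ ^ 4 := (Finset.sum_mul_sum _ _ _ _).symm
        _ = (∑ l, s l * s l) / ‖w‖ ^ 2 := by
            rw [hwsum, Finset.mul_sum, Finset.sum_div]
            refine sum_congr rfl fun l _ => ?_
            field_simp
    rw [e1, e2]
  have hbound : (0:ℝ) < 2 * ‖w‖ ^ 2 + ‖u‖ ^ 2 * (2 + matSpectralNorm V ^ 2 / ‖w‖ ^ 2) := by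
    have h2 : (0:ℝ) ≤ ‖u‖ ^ 2 * (2 + matSpectralNorm V ^ 2 / ‖w‖ ^ 2) := by positivity
    nlinarith
  have hznorm : ‖z‖ ≤ Real.sqrt (2 * ‖w‖ ^ 2 + ‖u‖ ^ 2 * (2 + matSpectralNorm V ^ 2 / ‖w‖ ^ 2)) := by
    rw [Real.le_sqrt (norm_nonneg z) (le_of_lt hbound)]
    rw [hzsq]
    have h1 : ‖w - u‖ ^ 2 ≤ 2 * ‖w‖ ^ 2 + 2 * ‖u‖ ^ 2 := by
      have h0 : ‖w - u‖ ^ 2 ≤ (‖w‖ + ‖u‖) ^ 2 :=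
        pow_le_pow_left₀ (norm_nonneg _) (norm_sub_le w u) 2
      nlinarith [sq_nonneg (‖w‖ - ‖u‖)]
    have h2 : (∑ l, s l * s l) ≤ (matSpectralNorm V * ‖u‖) ^ 2 := by
      rw [← euclid_norm_sq_aux s]
      nlinarith [norm_nonneg s]
    have h3 : (∑ l, s l * s l) / ‖w‖ ^ 2 ≤ (matSpectralNorm V * ‖u‖) ^ 2 / ‖w‖ ^ 2 := by
      gcongr
    have h4 : (matSpectralNorm V * ‖u‖) ^ 2 / ‖w‖ ^ 2 = ‖u‖ ^ 2 * (matSpectralNorm V ^ 2 / ‖w‖ ^ 2) := by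
      ring
    nlinarith
  -- convexity step and conclusion
  have htan : ∀ i, ℓ (G i θ) (y i) - ℓ (∑ j, u j * x i j) (y i) ≤ ld i * D i z := by
    intro i
    have h := convex_tangent_aux (hconv (y i)) (hdiff (y i)) (G i θ) (∑ j, u j * x i j)
    rw [hkey i] at h
    exact h
  have hgap : netObj ℓ f x y θ - linObj ℓ x y u ≤ (1/(n:ℝ)) * ∑ i, ld i * D i z := by
    have heq : netObj ℓ f x y θ - linObj ℓ x y u
        = (1/(n:ℝ)) * ∑ i, (ℓ (G i θ) (y i) - ℓ (∑ j, u j * x i j) (y i)) := by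
      have h1 : netObj ℓ f x y θ = (1/(n:ℝ)) * ∑ i, ℓ (G i θ) (y i) := rfl
      have h2 : linObj ℓ x y u = (1/(n:ℝ)) * ∑ i, ℓ (∑ j, u j * x i j) (y i) := rfl
      rw [h1, h2, ← mul_sub, ← Finset.sum_sub_distrib]
    rw [heq]
    have hn : (0:ℝ) ≤ 1/(n:ℝ) := by positivity
    exact mul_le_mul_of_nonneg_left (Finset.sum_le_sum fun i _ => htan i) hn
  rw [ge_iff_le, div_le_iff₀ (Real.sqrt_pos.mpr hbound)]
  calc netObj ℓ f x y θ - linObj ℓ x y u ≤ (1/(n:ℝ)) * ∑ i, ld i * D i z := hgap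
    _ = ⟪gradient (netObj ℓ f x y) θ, z⟫ := hgrad.symm
    _ ≤ ‖gradient (netObj ℓ f x y) θ‖ * ‖z‖ := real_inner_le_norm _ _
    _ ≤ ‖gradient (netObj ℓ f x y) θ‖ *
        Real.sqrt (2 * ‖w‖ ^ 2 + ‖u‖ ^ 2 * (2 + matSpectralNorm V ^ 2 / ‖w‖ ^ 2)) :=
        mul_le_mul_of_nonneg_left hznorm (norm_nonneg _)

end
end

section
/- Let F(w,V) = (1/n)·Σ_{i=1}^n ℓ(wᵀ(x_i + V f(x_i)); y_i) with ℓ(·;y) twice differentiable and convex, and F_lin(u) = (1/n)·Σ_{i=1}^n ℓ(uᵀx_i; y_i). Then for every V ∈ ℝ^{d×k} and every u ∈ ℝ^d with u ≠ 0: ‖∇F(0,V)‖ + ‖V‖·√( |λ_min(∇²F(0,V))|·‖∂²F/∂w²(0,V)‖ + λ_min(∇²F(0,V))² ) ≥ (F(0,V) − F_lin(u)) / ‖u‖, where ∇F(0,V) and ∇²F(0,V) are the gradient and Hessian with respect to (w, vec(V)) evaluated at w = 0, ∂²F/∂w²(0,V) is the d×d block of the Hessian corresponding to w, λ_min denotes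 minimal eigenvalue, ‖V‖ and ‖∂²F/∂w²(0,V)‖ are spectral norms, and ‖∇F(0,V)‖ is the Euclidean norm. -/
open scoped RealInnerProductSpace
open Finset

noncomputable section

/-- Minimal eigenvalue via the Rayleigh quotient `λ_min(M) = min_{‖z‖=1} zᵀ M z`. -/
def lambdaMin {ι : Type} [Fintype ι] [DecidableEq ι] (M : Matrix ι ι ℝ) : ℝ :=
  ⨅ z : {z : EuclideanSpace ℝ ι // ‖z‖ = 1}, ⟪z.1, Matrix.toEuclideanLin M z.1⟫

/-- The Hessian matrix of second partial derivatives of `F`. -/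
def hessianMatrix {ι : Type} [Fintype ι] [DecidableEq ι] (F : EuclideanSpace ℝ ι → ℝ)
    (z : EuclideanSpace ℝ ι) : Matrix ι ι ℝ :=
  Matrix.of fun p q =>
    fderiv ℝ (fun v => fderiv ℝ F v (EuclideanSpace.single q 1)) z (EuclideanSpace.single p 1)

/-- The `d × d` block of the Hessian corresponding to `w`. -/
def hessWW {d k n : ℕ} (ℓ : ℝ → ℝ → ℝ) (f : Vec d → Vec k)
    (x : Fin n → Vec d) (y : Fin n → ℝ) (z : Param d k) : Matrix (Fin d) (Fin d) ℝ :=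
  Matrix.of fun i j => hessianMatrix (netObj ℓ f x y) z (Sum.inl i) (Sum.inl j)

/-! ### Auxiliary material -/

section Aux

variable {d k n : ℕ}

/-- The scalar "pre-activation" as a function of the joint parameter. -/
def Pq (c : Fin d → ℝ) (b : Fin k → ℝ) (v : Param d k) : ℝ :=
  ∑ j, v (Sum.inl j) * (c j + ∑ l, v (Sum.inr (j, l)) * b l)

/-- Its derivative. -/
def DPq (c : Fin d → ℝ) (b : Fin k → ℝ) (v : Param d k) : Param d k →L[ℝ] ℝ :=
  ∑ j, ((c j + ∑ l, v (Sum.inr (j, l)) * b l) • (EuclideanSpace.proj (𝕜 := ℝ) (Sum.inl j))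
      + ∑ l, (v (Sum.inl j) * b l) • (EuclideanSpace.proj (𝕜 := ℝ) (Sum.inr (j, l))))

lemma DPq_apply (c : Fin d → ℝ) (b : Fin k → ℝ) (v h : Param d k) :
    DPq c b v h = ∑ j, (h (Sum.inl j) * (c j + ∑ l, v (Sum.inr (j, l)) * b l)
      + ∑ l, v (Sum.inl j) * b l * h (Sum.inr (j, l))) := by
  simp [DPq, mul_comm]

lemma hasFDerivAt_Pq (c : Fin d → ℝ) (b : Fin k → ℝ) (v : Param d k) :
    HasFDerivAt (Pq c b) (DPq c b v) v := by
  have h1 : ∀ p : Fin d ⊕ Fin d × Fin k, HasFDerivAt (fun w : Param d k => w p)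
      (EuclideanSpace.proj (𝕜 := ℝ) p) v := fun p => (EuclideanSpace.proj (𝕜 := ℝ) p).hasFDerivAt
  unfold Pq DPq
  apply HasFDerivAt.fun_sum
  intro j _
  have hg : HasFDerivAt (fun w : Param d k => c j + ∑ l, w (Sum.inr (j, l)) * b l)
      (∑ l, b l • (EuclideanSpace.proj (𝕜 := ℝ) (Sum.inr (j, l)))) v := by
    exact (HasFDerivAt.fun_sum (fun l _ => (h1 (Sum.inr (j, l))).mul_const (b l))).const_add (c j)
  have := (h1 (Sum.inl j)).fun_mul hg
  convert this using 1
  ext h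
  simp only [ContinuousLinearMap.add_apply, ContinuousLinearMap.smul_apply,
    ContinuousLinearMap.sum_apply, PiLp.proj_apply, smul_eq_mul, Finset.mul_sum]
  rw [add_comm]
  congr 1
  rw [Finset.smul_sum]
  exact Finset.sum_congr rfl fun l _ => by rw [smul_smul]

variable (ℓ : ℝ → ℝ → ℝ) (f : Vec d → Vec k) (x : Fin n → Vec d) (y : Fin n → ℝ)

lemma netObj_eq :
    netObj ℓ f x y = fun z => (1 / (n : ℝ)) *
      ∑ i, ℓ (Pq (fun j => x i j) (fun l => f (x i) l) z) (y i) := rfl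

lemma hasFDerivAt_netObj (hdiff : ∀ y₀ : ℝ, Differentiable ℝ fun p => ℓ p y₀) (v : Param d k) :
    HasFDerivAt (netObj ℓ f x y)
      ((1 / (n : ℝ)) • ∑ i, deriv (fun p => ℓ p (y i))
          (Pq (fun j => x i j) (fun l => f (x i) l) v) •
          DPq (fun j => x i j) (fun l => f (x i) l) v) v := by
  rw [netObj_eq]
  apply HasFDerivAt.const_mul
  apply HasFDerivAt.fun_sum
  intro i _
  exact ((hdiff (y i)) _).hasDerivAt.comp_hasFDerivAt v (hasFDerivAt_Pq _ _ v)

lemma fderiv_netObj (hdiff : ∀ y₀ : ℝ, Differentiable ℝ fun p => ℓ p y₀) (v h : Param d k) :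
    fderiv ℝ (netObj ℓ f x y) v h = (1 / (n : ℝ)) *
      ∑ i, deriv (fun p => ℓ p (y i)) (Pq (fun j => x i j) (fun l => f (x i) l) v) *
        DPq (fun j => x i j) (fun l => f (x i) l) v h := by
  rw [(hasFDerivAt_netObj ℓ f x y hdiff v).fderiv]
  simp [Finset.sum_apply]

end Aux


lemma pairWV_inl {d k : ℕ} (w : Vec d) (V : Matrix (Fin d) (Fin k) ℝ) (j : Fin d) :
    pairWV w V (Sum.inl j) = w j := rfl

lemma pairWV_inr {d k : ℕ} (w : Vec d) (V : Matrix (Fin d) (Fin k) ℝ) (p : Fin d × Fin k) :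
    pairWV w V (Sum.inr p) = V p.1 p.2 := rfl

lemma pairWV_zero_inl {d k : ℕ} (V : Matrix (Fin d) (Fin k) ℝ) (j : Fin d) :
    pairWV (0 : Vec d) V (Sum.inl j) = 0 := rfl

section Aux2

variable {d k n : ℕ}

lemma DPq_single_inl (c : Fin d → ℝ) (b : Fin k → ℝ) (v : Param d k) (j₀ : Fin d) :
    DPq c b v (EuclideanSpace.single (Sum.inl j₀) 1) =
      c j₀ + ∑ l, v (Sum.inr (j₀, l)) * b l := by
  rw [DPq_apply]
  simp [EuclideanSpace.single_apply]

lemma DPq_single_inr (c : Fin d → ℝ) (b : Fin k → ℝ) (v : Param d k) (p : Fin d × Fin k) :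
    DPq c b v (EuclideanSpace.single (Sum.inr p) 1) = v (Sum.inl p.1) * b p.2 := by
  rw [DPq_apply]
  simp only [EuclideanSpace.single_apply, Prod.eq_iff_fst_eq_snd_eq, mul_ite, mul_one, mul_zero,
    Sum.inr.injEq, Sum.inl.injEq, reduceCtorEq, if_false, zero_mul, add_zero, ite_and,
    Finset.sum_ite_eq', Finset.mem_univ, if_true, zero_add, Finset.sum_ite_eq]
  simp

lemma Pq_pair_zero (c : Fin d → ℝ) (b : Fin k → ℝ) (V : Matrix (Fin d) (Fin k) ℝ) :
    Pq c b (pairWV 0 V) = 0 := by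
  unfold Pq
  simp [pairWV_zero_inl]

variable (ℓ : ℝ → ℝ → ℝ) (f : Vec d → Vec k) (x : Fin n → Vec d) (y : Fin n → ℝ)

/-- The vector `m = (1/n)·Σᵢ ℓ'(0; yᵢ) f(xᵢ)`. -/
def Mval (l : Fin k) : ℝ :=
  (1 / (n : ℝ)) * ∑ i, deriv (fun p => ℓ p (y i)) 0 * f (x i) l

def mvec : Vec k := (EuclideanSpace.equiv (Fin k) ℝ).symm fun l => Mval ℓ f x y l

lemma mvec_apply (l : Fin k) : mvec ℓ f x y l = Mval ℓ f x y l := rfl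

end Aux2


section Hess

variable {d k n : ℕ} (ℓ : ℝ → ℝ → ℝ) (f : Vec d → Vec k) (x : Fin n → Vec d) (y : Fin n → ℝ)
  (V : Matrix (Fin d) (Fin k) ℝ)

lemma hess_col_inr (hdiff : ∀ y₀ : ℝ, Differentiable ℝ fun p => ℓ p y₀)
    (hdiff2 : ∀ y₀ : ℝ, Differentiable ℝ (deriv fun p => ℓ p y₀))
    (j₀ : Fin d) (l₀ : Fin k) (p : Fin d ⊕ Fin d × Fin k) :
    hessianMatrix (netObj ℓ f x y) (pairWV 0 V) p (Sum.inr (j₀, l₀)) =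
      EuclideanSpace.single p (1 : ℝ) (Sum.inl j₀) * Mval ℓ f x y l₀ := by
  have hfun : (fun v : Param d k =>
      fderiv ℝ (netObj ℓ f x y) v (EuclideanSpace.single (Sum.inr (j₀, l₀)) 1)) =
      fun v => (1 / (n : ℝ)) * ∑ i, deriv (fun p => ℓ p (y i))
        (Pq (fun j => x i j) (fun l => f (x i) l) v) * (v (Sum.inl j₀) * f (x i) l₀) := by
    funext v
    rw [fderiv_netObj ℓ f x y hdiff]
    congr 1
    refine Finset.sum_congr rfl fun i _ => ?_
    rw [DPq_single_inr]
  have hD : HasFDerivAt (fun v : Param d k => (1 / (n : ℝ)) * ∑ i, deriv (fun p => ℓ p (y i))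
      (Pq (fun j => x i j) (fun l => f (x i) l) v) * (v (Sum.inl j₀) * f (x i) l₀))
      ((1 / (n : ℝ)) • ∑ i,
        (deriv (fun p => ℓ p (y i)) (Pq (fun j => x i j) (fun l => f (x i) l) (pairWV 0 V)) •
            ((f (x i) l₀) • EuclideanSpace.proj (𝕜 := ℝ) (Sum.inl j₀)) +
          ((pairWV 0 V) (Sum.inl j₀) * f (x i) l₀) •
            (deriv (deriv (fun p => ℓ p (y i)))
                (Pq (fun j => x i j) (fun l => f (x i) l) (pairWV 0 V)) •
              DPq (fun j => x i j) (fun l => f (x i) l) (pairWV 0 V)))) (pairWV 0 V) := by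
    apply HasFDerivAt.const_mul
    apply HasFDerivAt.fun_sum
    intro i _
    have h1 : HasFDerivAt (fun v : Param d k =>
        deriv (fun p => ℓ p (y i)) (Pq (fun j => x i j) (fun l => f (x i) l) v))
        (deriv (deriv (fun p => ℓ p (y i)))
            (Pq (fun j => x i j) (fun l => f (x i) l) (pairWV 0 V)) •
          DPq (fun j => x i j) (fun l => f (x i) l) (pairWV 0 V)) (pairWV 0 V) :=
      ((hdiff2 (y i)) _).hasDerivAt.comp_hasFDerivAt _ (hasFDerivAt_Pq _ _ _)
    have hp : HasFDerivAt (fun w : Param d k => w (Sum.inl j₀))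
        (EuclideanSpace.proj (𝕜 := ℝ) ((Sum.inl j₀ : Fin d ⊕ Fin d × Fin k))) (pairWV 0 V) := by
      exact (EuclideanSpace.proj (𝕜 := ℝ) ((Sum.inl j₀ : Fin d ⊕ Fin d × Fin k))).hasFDerivAt
    have h2 : HasFDerivAt (fun v : Param d k => v (Sum.inl j₀) * f (x i) l₀)
        ((f (x i) l₀) • EuclideanSpace.proj (𝕜 := ℝ) (Sum.inl j₀)) (pairWV 0 V) :=
      hp.mul_const _
    exact h1.mul h2
  show fderiv ℝ (fun v : Param d k =>
      fderiv ℝ (netObj ℓ f x y) v (EuclideanSpace.single (Sum.inr (j₀, l₀)) 1))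
      (pairWV 0 V) (EuclideanSpace.single p 1) = _
  rw [hfun, hD.fderiv]
  simp only [ContinuousLinearMap.smul_apply, ContinuousLinearMap.sum_apply,
    ContinuousLinearMap.add_apply, PiLp.proj_apply, smul_eq_mul, pairWV_zero_inl, zero_mul,
    mul_zero, add_zero, Pq_pair_zero]
  simp only [Mval, Finset.mul_sum]
  exact Finset.sum_congr rfl fun i _ => by ring

lemma hess_inr_inl (hdiff : ∀ y₀ : ℝ, Differentiable ℝ fun p => ℓ p y₀)
    (hdiff2 : ∀ y₀ : ℝ, Differentiable ℝ (deriv fun p => ℓ p y₀))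
    (j₀ j₁ : Fin d) (l₁ : Fin k) :
    hessianMatrix (netObj ℓ f x y) (pairWV 0 V) (Sum.inr (j₁, l₁)) (Sum.inl j₀) =
      (if j₀ = j₁ then Mval ℓ f x y l₁ else 0) := by
  have hfun : (fun v : Param d k =>
      fderiv ℝ (netObj ℓ f x y) v (EuclideanSpace.single (Sum.inl j₀) 1)) =
      fun v => (1 / (n : ℝ)) * ∑ i, deriv (fun p => ℓ p (y i))
        (Pq (fun j => x i j) (fun l => f (x i) l) v) *
        (x i j₀ + ∑ l, v (Sum.inr (j₀, l)) * f (x i) l) := by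
    funext v
    rw [fderiv_netObj ℓ f x y hdiff]
    congr 1
    refine Finset.sum_congr rfl fun i _ => ?_
    rw [DPq_single_inl]
  have hD : HasFDerivAt (fun v : Param d k => (1 / (n : ℝ)) * ∑ i, deriv (fun p => ℓ p (y i))
      (Pq (fun j => x i j) (fun l => f (x i) l) v) *
      (x i j₀ + ∑ l, v (Sum.inr (j₀, l)) * f (x i) l))
      ((1 / (n : ℝ)) • ∑ i,
        (deriv (fun p => ℓ p (y i)) (Pq (fun j => x i j) (fun l => f (x i) l) (pairWV 0 V)) •
            (∑ l, (f (x i) l) • EuclideanSpace.proj (𝕜 := ℝ) (Sum.inr (j₀, l))) +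
          (x i j₀ + ∑ l, (pairWV 0 V) (Sum.inr (j₀, l)) * f (x i) l) •
            (deriv (deriv (fun p => ℓ p (y i)))
                (Pq (fun j => x i j) (fun l => f (x i) l) (pairWV 0 V)) •
              DPq (fun j => x i j) (fun l => f (x i) l) (pairWV 0 V)))) (pairWV 0 V) := by
    apply HasFDerivAt.const_mul
    apply HasFDerivAt.fun_sum
    intro i _
    have h1 : HasFDerivAt (fun v : Param d k =>
        deriv (fun p => ℓ p (y i)) (Pq (fun j => x i j) (fun l => f (x i) l) v))
        (deriv (deriv (fun p => ℓ p (y i)))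
            (Pq (fun j => x i j) (fun l => f (x i) l) (pairWV 0 V)) •
          DPq (fun j => x i j) (fun l => f (x i) l) (pairWV 0 V)) (pairWV 0 V) :=
      ((hdiff2 (y i)) _).hasDerivAt.comp_hasFDerivAt _ (hasFDerivAt_Pq _ _ _)
    have h2 : HasFDerivAt (fun v : Param d k => x i j₀ + ∑ l, v (Sum.inr (j₀, l)) * f (x i) l)
        (∑ l, (f (x i) l) • EuclideanSpace.proj (𝕜 := ℝ) (Sum.inr (j₀, l))) (pairWV 0 V) :=
      (HasFDerivAt.fun_sum (fun l _ => by
        have hp : HasFDerivAt (fun w : Param d k => w (Sum.inr (j₀, l)))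
            (EuclideanSpace.proj (𝕜 := ℝ) ((Sum.inr (j₀, l) : Fin d ⊕ Fin d × Fin k))) (pairWV 0 V) := by
          exact (EuclideanSpace.proj (𝕜 := ℝ) ((Sum.inr (j₀, l) : Fin d ⊕ Fin d × Fin k))).hasFDerivAt
        exact hp.mul_const (f (x i) l))).const_add _
    exact h1.mul h2
  show fderiv ℝ (fun v : Param d k =>
      fderiv ℝ (netObj ℓ f x y) v (EuclideanSpace.single (Sum.inl j₀) 1))
      (pairWV 0 V) (EuclideanSpace.single (Sum.inr (j₁, l₁)) 1) = _
  rw [hfun, hD.fderiv]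
  simp only [ContinuousLinearMap.smul_apply, ContinuousLinearMap.sum_apply,
    ContinuousLinearMap.add_apply, PiLp.proj_apply, smul_eq_mul, Pq_pair_zero,
    DPq_single_inr, pairWV_zero_inl, zero_mul, mul_zero, add_zero,
    EuclideanSpace.single_apply]
  simp only [Sum.inr.injEq, Prod.mk.injEq, mul_ite, mul_one, mul_zero, ite_and,
    Finset.sum_ite_eq', Finset.mem_univ, if_true]
  by_cases h : j₀ = j₁
  · simp [h, Finset.sum_ite_eq', Mval]
  · simp [h]

lemma hess_inr_inr (hdiff : ∀ y₀ : ℝ, Differentiable ℝ fun p => ℓ p y₀)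
    (hdiff2 : ∀ y₀ : ℝ, Differentiable ℝ (deriv fun p => ℓ p y₀))
    (p q : Fin d × Fin k) :
    hessianMatrix (netObj ℓ f x y) (pairWV 0 V) (Sum.inr p) (Sum.inr q) = 0 := by
  rw [hess_col_inr ℓ f x y V hdiff hdiff2]
  simp [EuclideanSpace.single_apply]

lemma hess_inl_inr (hdiff : ∀ y₀ : ℝ, Differentiable ℝ fun p => ℓ p y₀)
    (hdiff2 : ∀ y₀ : ℝ, Differentiable ℝ (deriv fun p => ℓ p y₀))
    (j : Fin d) (q : Fin d × Fin k) :
    hessianMatrix (netObj ℓ f x y) (pairWV 0 V) (Sum.inl j) (Sum.inr q) =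
      (if q.1 = j then Mval ℓ f x y q.2 else 0) := by
  rw [hess_col_inr ℓ f x y V hdiff hdiff2]
  simp [EuclideanSpace.single_apply]

end Hess


section Support

lemma inner_coord {ι : Type} [Fintype ι] (a b : EuclideanSpace ℝ ι) :
    ⟪a, b⟫ = ∑ p, a p * b p := by
  simp [PiLp.inner_apply]
  exact Finset.sum_congr rfl fun _ _ => mul_comm _ _

lemma toEuclideanLin_coord {ι : Type} [Fintype ι] [DecidableEq ι] (M : Matrix ι ι ℝ)
    (v : EuclideanSpace ℝ ι) (p : ι) :
    (Matrix.toEuclideanLin M v : EuclideanSpace ℝ ι) p = ∑ q, M p q * v q := by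
  simp [Matrix.toEuclideanLin_apply, Matrix.mulVec, dotProduct]

lemma toEuclideanLin_coord' {a c : ℕ} (M : Matrix (Fin a) (Fin c) ℝ)
    (v : EuclideanSpace ℝ (Fin c)) (p : Fin a) :
    (Matrix.toEuclideanLin M v : EuclideanSpace ℝ (Fin a)) p = ∑ q, M p q * v q := by
  simp [Matrix.toEuclideanLin_apply, Matrix.mulVec, dotProduct]

lemma norm_sq_coord {ι : Type} [Fintype ι] (a : EuclideanSpace ℝ ι) :
    ‖a‖ ^ 2 = ∑ p, a p ^ 2 := by
  rw [← real_inner_self_eq_norm_sq, inner_coord]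
  exact Finset.sum_congr rfl fun p _ => (sq (a p)).symm

lemma inner_gradient_eq_fderiv {E : Type*} [NormedAddCommGroup E] [InnerProductSpace ℝ E]
    [CompleteSpace E] (F : E → ℝ) (z v : E) :
    ⟪gradient F z, v⟫ = fderiv ℝ F z v := by
  rw [gradient]
  exact InnerProductSpace.toDual_symm_apply

lemma tangent_le (φ : ℝ → ℝ) (hc : ConvexOn ℝ Set.univ φ) (hd : Differentiable ℝ φ) (t : ℝ) :
    φ 0 + deriv φ 0 * t ≤ φ t := by
  rcases lt_trichotomy t 0 with h | h | h
  · have hs := hc.slope_le_deriv (Set.mem_univ t) (Set.mem_univ 0) h (hd 0)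
    rw [slope_def_field] at hs
    have : deriv φ 0 * t ≤ φ t - φ 0 := by
      have := (div_le_iff₀ (by linarith : (0:ℝ) < 0 - t)).mp hs
      nlinarith
    linarith
  · simp [h]
  · have hs := hc.deriv_le_slope (Set.mem_univ 0) (Set.mem_univ t) h (hd 0)
    rw [slope_def_field] at hs
    have : deriv φ 0 * t ≤ φ t - φ 0 := by
      have := (le_div_iff₀ (by linarith : (0:ℝ) < t - 0)).mp hs
      nlinarith
    linarith

end Support


section Rayleigh

variable {d k n : ℕ} (ℓ : ℝ → ℝ → ℝ) (f : Vec d → Vec k) (x : Fin n → Vec d) (y : Fin n → ℝ)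
  (V : Matrix (Fin d) (Fin k) ℝ)

lemma quad_form_eq (hdiff : ∀ y₀ : ℝ, Differentiable ℝ fun p => ℓ p y₀)
    (hdiff2 : ∀ y₀ : ℝ, Differentiable ℝ (deriv fun p => ℓ p y₀))
    (w0 : Vec d) (hw0 : ‖w0‖ = 1) (t : ℝ) :
    ⟪pairWV w0 (Matrix.of fun j l => -(t * w0 j * mvec ℓ f x y l)),
        Matrix.toEuclideanLin (hessianMatrix (netObj ℓ f x y) (pairWV 0 V))
          (pairWV w0 (Matrix.of fun j l => -(t * w0 j * mvec ℓ f x y l)))⟫ =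
      ⟪w0, Matrix.toEuclideanLin (hessWW ℓ f x y (pairWV 0 V)) w0⟫ -
        2 * t * ‖mvec ℓ f x y‖ ^ 2 := by
  set m := mvec ℓ f x y with hm
  set H := hessianMatrix (netObj ℓ f x y) (pairWV 0 V) with hH
  set zt := pairWV w0 (Matrix.of fun j l => -(t * w0 j * m l)) with hzt
  have hw0sq : ∑ j, w0 j ^ 2 = 1 := by rw [← norm_sq_coord, hw0]; norm_num
  have hmsq : ∑ l, m l ^ 2 = ‖m‖ ^ 2 := (norm_sq_coord m).symm
  have hzt_inl : ∀ j, zt (Sum.inl j) = w0 j := fun j => rfl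
  have hzt_inr : ∀ pr : Fin d × Fin k, zt (Sum.inr pr) = -(t * w0 pr.1 * m pr.2) :=
    fun pr => rfl
  have block1 : ∀ j, (∑ q, H (Sum.inl j) q * zt q) =
      (∑ j', H (Sum.inl j) (Sum.inl j') * w0 j') - t * w0 j * ‖m‖ ^ 2 := by
    intro j
    rw [Fintype.sum_sum_type]
    congr 1
    rw [Fintype.sum_prod_type]
    have : ∀ j' l', H (Sum.inl j) (Sum.inr (j', l')) * zt (Sum.inr (j', l')) =
        (if j' = j then Mval ℓ f x y l' * -(t * w0 j' * m l') else 0) := by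
      intro j' l'
      rw [hH, hess_inl_inr ℓ f x y V hdiff hdiff2, hzt_inr]
      by_cases h : j' = j <;> simp [h]
    rw [Finset.sum_congr rfl fun j' _ => Finset.sum_congr rfl fun l' _ => this j' l',
      Finset.sum_comm]
    simp only [Finset.sum_ite_eq', Finset.mem_univ, if_true]
    have h2 : ∑ l', Mval ℓ f x y l' * -(t * w0 j * m l') = -(t * w0 j * ∑ l', m l' ^ 2) := by
      rw [Finset.mul_sum, ← Finset.sum_neg_distrib]
      exact Finset.sum_congr rfl fun l' _ => by show m l' * _ = _; ring
    rw [h2, hmsq]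
  have block2 : ∀ pr : Fin d × Fin k, (∑ q, H (Sum.inr pr) q * zt q) =
      Mval ℓ f x y pr.2 * w0 pr.1 := by
    intro pr
    rw [Fintype.sum_sum_type]
    have h1 : ∀ j', H (Sum.inr pr) (Sum.inl j') * zt (Sum.inl j') =
        (if j' = pr.1 then Mval ℓ f x y pr.2 * w0 j' else 0) := by
      intro j'
      rw [hH, show (pr : Fin d × Fin k) = (pr.1, pr.2) from rfl,
        hess_inr_inl ℓ f x y V hdiff hdiff2, hzt_inl]
      by_cases h : j' = pr.1 <;> simp [h]
    have h2 : ∀ qr : Fin d × Fin k, H (Sum.inr pr) (Sum.inr qr) * zt (Sum.inr qr) = 0 := by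
      intro qr
      rw [hH, hess_inr_inr ℓ f x y V hdiff hdiff2, zero_mul]
    rw [Finset.sum_congr rfl fun j' _ => h1 j', Finset.sum_congr rfl fun qr _ => h2 qr]
    simp [Finset.sum_ite_eq']
  rw [inner_coord, Fintype.sum_sum_type]
  have hTz : ∀ p, (Matrix.toEuclideanLin H zt : Param d k) p = ∑ q, H p q * zt q :=
    toEuclideanLin_coord H zt
  have e1 : ∑ j, zt (Sum.inl j) * (Matrix.toEuclideanLin H zt : Param d k) (Sum.inl j)
      = ∑ j, (w0 j * ∑ j', H (Sum.inl j) (Sum.inl j') * w0 j'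
        - t * w0 j ^ 2 * ‖m‖ ^ 2) :=
    Finset.sum_congr rfl fun j _ => by rw [hTz, block1, hzt_inl]; ring
  have e2 : ∑ pr : Fin d × Fin k,
        zt (Sum.inr pr) * (Matrix.toEuclideanLin H zt : Param d k) (Sum.inr pr)
      = ∑ j, ∑ l, -(t * w0 j ^ 2 * m l ^ 2) := by
    rw [Fintype.sum_prod_type]
    refine Finset.sum_congr rfl fun j _ => Finset.sum_congr rfl fun l _ => ?_
    rw [hTz, block2, hzt_inr]
    show -(t * w0 j * m l) * (m l * w0 j) = _
    ring
  have e3 : ∀ j ∈ Finset.univ,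
      w0 j * (Matrix.toEuclideanLin (hessWW ℓ f x y (pairWV 0 V)) w0 : Vec d) j
        = w0 j * ∑ j', H (Sum.inl j) (Sum.inl j') * w0 j' := by
    intro j _
    rw [toEuclideanLin_coord']
    rfl
  have c1 : ∑ j, (w0 j * ∑ j', H (Sum.inl j) (Sum.inl j') * w0 j' - t * w0 j ^ 2 * ‖m‖ ^ 2)
      = (∑ j, w0 j * ∑ j', H (Sum.inl j) (Sum.inl j') * w0 j') - t * ‖m‖ ^ 2 := by
    rw [Finset.sum_sub_distrib]
    congr 1
    calc ∑ j, t * w0 j ^ 2 * ‖m‖ ^ 2 = (∑ j, w0 j ^ 2) * (t * ‖m‖ ^ 2) := by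
          rw [Finset.sum_mul]; exact Finset.sum_congr rfl fun j _ => by ring
      _ = t * ‖m‖ ^ 2 := by rw [hw0sq, one_mul]
  have c2 : ∑ j, ∑ l, -(t * w0 j ^ 2 * m l ^ 2) = -(t * ‖m‖ ^ 2) := by
    calc ∑ j, ∑ l, -(t * w0 j ^ 2 * m l ^ 2)
        = ∑ j, w0 j ^ 2 * -(t * ∑ l, m l ^ 2) := by
          refine Finset.sum_congr rfl fun j _ => ?_
          rw [Finset.mul_sum, ← Finset.sum_neg_distrib, Finset.mul_sum]
          exact Finset.sum_congr rfl fun l _ => by ring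
      _ = (∑ j, w0 j ^ 2) * -(t * ∑ l, m l ^ 2) := by rw [Finset.sum_mul]
      _ = -(t * ‖m‖ ^ 2) := by rw [hw0sq, hmsq, one_mul]
  rw [e1, e2, c1, c2, inner_coord, Finset.sum_congr rfl e3]
  ring

end Rayleigh


section LamKey

variable {d k n : ℕ} (ℓ : ℝ → ℝ → ℝ) (f : Vec d → Vec k) (x : Fin n → Vec d) (y : Fin n → ℝ)
  (V : Matrix (Fin d) (Fin k) ℝ)

lemma norm_pair_sq (w0 : Vec d) (M : Matrix (Fin d) (Fin k) ℝ) :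
    ‖pairWV w0 M‖ ^ 2 = ‖w0‖ ^ 2 + ∑ j, ∑ l, M j l ^ 2 := by
  rw [norm_sq_coord, Fintype.sum_sum_type, Fintype.sum_prod_type, norm_sq_coord w0]
  rfl

lemma bddBelow_rayleigh {ι : Type} [Fintype ι] [DecidableEq ι] (M : Matrix ι ι ℝ) :
    BddBelow (Set.range fun z : {z : EuclideanSpace ℝ ι // ‖z‖ = 1} =>
      ⟪z.1, Matrix.toEuclideanLin M z.1⟫) := by
  refine ⟨-‖LinearMap.toContinuousLinearMap (Matrix.toEuclideanLin M)‖, ?_⟩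
  rintro _ ⟨z, rfl⟩
  have h1 : |⟪z.1, Matrix.toEuclideanLin M z.1⟫| ≤ ‖z.1‖ * ‖Matrix.toEuclideanLin M z.1‖ :=
    abs_real_inner_le_norm _ _
  have h2 : ‖Matrix.toEuclideanLin M z.1‖ ≤
      ‖LinearMap.toContinuousLinearMap (Matrix.toEuclideanLin M)‖ * ‖z.1‖ :=
    (LinearMap.toContinuousLinearMap (Matrix.toEuclideanLin M)).le_opNorm z.1
  have h3 := z.2
  rw [h3] at h1 h2
  simp only [one_mul, mul_one] at h1 h2
  have := neg_abs_le ⟪z.1, Matrix.toEuclideanLin M z.1⟫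
  linarith

lemma lam_key (hdiff : ∀ y₀ : ℝ, Differentiable ℝ fun p => ℓ p y₀)
    (hdiff2 : ∀ y₀ : ℝ, Differentiable ℝ (deriv fun p => ℓ p y₀))
    (w0 : Vec d) (hw0 : ‖w0‖ = 1) (t : ℝ) :
    lambdaMin (hessianMatrix (netObj ℓ f x y) (pairWV 0 V)) * (1 + t ^ 2 * ‖mvec ℓ f x y‖ ^ 2) ≤
      ⟪w0, Matrix.toEuclideanLin (hessWW ℓ f x y (pairWV 0 V)) w0⟫ -
        2 * t * ‖mvec ℓ f x y‖ ^ 2 := by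
  set m := mvec ℓ f x y with hm
  set H := hessianMatrix (netObj ℓ f x y) (pairWV 0 V) with hH
  set s := ‖m‖ ^ 2 with hs
  have hs0 : 0 ≤ s := sq_nonneg _
  set zt := pairWV w0 (Matrix.of fun j l => -(t * w0 j * m l)) with hzt
  have hztsq : ‖zt‖ ^ 2 = 1 + t ^ 2 * s := by
    rw [hzt, norm_pair_sq, hw0]
    have : ∑ j, ∑ l, ((Matrix.of fun j l => -(t * w0 j * m l)) j l) ^ 2
        = t ^ 2 * ((∑ j, w0 j ^ 2) * (∑ l, m l ^ 2)) := by
      rw [Finset.sum_mul_sum, Finset.mul_sum]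
      refine Finset.sum_congr rfl fun j _ => ?_
      rw [Finset.mul_sum]
      exact Finset.sum_congr rfl fun l _ => by simp [Matrix.of_apply]; ring
    rw [this, show ∑ j, w0 j ^ 2 = 1 by rw [← norm_sq_coord, hw0]; norm_num,
      show ∑ l, m l ^ 2 = s by rw [← norm_sq_coord m], one_pow]
    ring
  have hpos : (0 : ℝ) < 1 + t ^ 2 * s := by positivity
  have hsq : Real.sqrt (1 + t ^ 2 * s) > 0 := Real.sqrt_pos.mpr hpos
  have hztnorm : ‖zt‖ = Real.sqrt (1 + t ^ 2 * s) := by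
    rw [← hztsq, Real.sqrt_sq (norm_nonneg _)]
  set r := (Real.sqrt (1 + t ^ 2 * s))⁻¹ with hr
  have hunit : ‖r • zt‖ = 1 := by
    rw [norm_smul, hztnorm, hr, Real.norm_eq_abs, abs_of_nonneg (by positivity)]
    exact inv_mul_cancel₀ (ne_of_gt hsq)
  have hle : lambdaMin H ≤ ⟪r • zt, Matrix.toEuclideanLin H (r • zt)⟫ :=
    ciInf_le (bddBelow_rayleigh H) ⟨r • zt, hunit⟩
  have hsc : ⟪r • zt, Matrix.toEuclideanLin H (r • zt)⟫
      = r ^ 2 * ⟪zt, Matrix.toEuclideanLin H zt⟫ := by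
    rw [map_smul, real_inner_smul_left, real_inner_smul_right]
    ring
  have hquad := quad_form_eq ℓ f x y V hdiff hdiff2 w0 hw0 t
  have hr2 : r ^ 2 = (1 + t ^ 2 * s)⁻¹ := by
    rw [hr, inv_pow, Real.sq_sqrt (le_of_lt hpos)]
  rw [hsc, hquad, ← hm, ← hs, hr2] at hle
  calc lambdaMin H * (1 + t ^ 2 * s)
      ≤ ((1 + t ^ 2 * s)⁻¹ * (⟪w0, Matrix.toEuclideanLin (hessWW ℓ f x y (pairWV 0 V)) w0⟫
          - 2 * t * s)) * (1 + t ^ 2 * s) :=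
        mul_le_mul_of_nonneg_right hle (le_of_lt hpos)
    _ = ⟪w0, Matrix.toEuclideanLin (hessWW ℓ f x y (pairWV 0 V)) w0⟫ - 2 * t * s := by
        field_simp

end LamKey


section Final

variable {d k n : ℕ} (ℓ : ℝ → ℝ → ℝ) (f : Vec d → Vec k) (x : Fin n → Vec d) (y : Fin n → ℝ)
  (V : Matrix (Fin d) (Fin k) ℝ)

lemma norm_pairWV_left (u : Vec d) : ‖pairWV u (0 : Matrix (Fin d) (Fin k) ℝ)‖ = ‖u‖ := by
  have h : ‖pairWV u (0 : Matrix (Fin d) (Fin k) ℝ)‖ ^ 2 = ‖u‖ ^ 2 := by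
    rw [norm_pair_sq]
    simp
  have := congrArg Real.sqrt h
  rwa [Real.sqrt_sq (norm_nonneg _), Real.sqrt_sq (norm_nonneg _)] at this

lemma fderiv_netObj_pair (hdiff : ∀ y₀ : ℝ, Differentiable ℝ fun p => ℓ p y₀) (u : Vec d) :
    fderiv ℝ (netObj ℓ f x y) (pairWV 0 V) (pairWV u 0) =
      (1 / (n : ℝ)) * ∑ i, deriv (fun p => ℓ p (y i)) 0 *
        (∑ j, u j * (x i j + ∑ l, V j l * f (x i) l)) := by
  rw [fderiv_netObj ℓ f x y hdiff]
  congr 1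
  refine Finset.sum_congr rfl fun i _ => ?_
  rw [Pq_pair_zero, DPq_apply]
  congr 1
  refine Finset.sum_congr rfl fun j _ => ?_
  have h1 : (pairWV u (0 : Matrix (Fin d) (Fin k) ℝ)) (Sum.inl j) = u j := rfl
  have h2 : ∀ l, (pairWV u (0 : Matrix (Fin d) (Fin k) ℝ)) (Sum.inr (j, l)) = 0 := fun l => rfl
  have h3 : ∀ l, (pairWV (0 : Vec d) V) (Sum.inr (j, l)) = V j l := fun l => rfl
  rw [h1, pairWV_zero_inl]
  simp only [h2, h3, zero_mul, mul_zero, Finset.sum_const_zero, add_zero]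

end Final

/-- Theorem 2 of the paper. -/
theorem at_zero_grad_hessian_lower_bound
    {d k n : ℕ} (ℓ : ℝ → ℝ → ℝ) (f : Vec d → Vec k)
    (x : Fin n → Vec d) (y : Fin n → ℝ)
    (hconv : ∀ y₀ : ℝ, ConvexOn ℝ Set.univ fun p => ℓ p y₀)
    (hdiff : ∀ y₀ : ℝ, Differentiable ℝ fun p => ℓ p y₀)
    (hdiff2 : ∀ y₀ : ℝ, Differentiable ℝ (deriv fun p => ℓ p y₀))
    (V : Matrix (Fin d) (Fin k) ℝ) (u : Vec d) (hu : u ≠ 0) :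
    ‖gradient (netObj ℓ f x y) (pairWV 0 V)‖ +
      matSpectralNorm V *
        Real.sqrt (|lambdaMin (hessianMatrix (netObj ℓ f x y) (pairWV 0 V))| *
            matSpectralNorm (hessWW ℓ f x y (pairWV 0 V)) +
          lambdaMin (hessianMatrix (netObj ℓ f x y) (pairWV 0 V)) ^ 2) ≥
      (netObj ℓ f x y (pairWV 0 V) - linObj ℓ x y u) / ‖u‖ := by
  classical
  have hu' : (0:ℝ) < ‖u‖ := norm_pos_iff.mpr hu
  set m := mvec ℓ f x y with hm
  set lam := lambdaMin (hessianMatrix (netObj ℓ f x y) (pairWV 0 V)) with hlam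
  set K := matSpectralNorm (hessWW ℓ f x y (pairWV 0 V)) with hK
  have hK0 : (0:ℝ) ≤ K := norm_nonneg _
  set w0 : Vec d := ‖u‖⁻¹ • u with hw0
  have hw0n : ‖w0‖ = 1 := by
    rw [hw0, norm_smul, Real.norm_eq_abs, abs_of_nonneg (inv_nonneg.mpr (norm_nonneg u))]
    exact inv_mul_cancel₀ (ne_of_gt hu')
  set Q := ⟪w0, Matrix.toEuclideanLin (hessWW ℓ f x y (pairWV 0 V)) w0⟫ with hQdef
  have hQb : |Q| ≤ K := by
    have h1 : |Q| ≤ ‖w0‖ * ‖Matrix.toEuclideanLin (hessWW ℓ f x y (pairWV 0 V)) w0‖ :=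
      abs_real_inner_le_norm _ _
    have h2 : ‖Matrix.toEuclideanLin (hessWW ℓ f x y (pairWV 0 V)) w0‖ ≤ K * ‖w0‖ :=
      (LinearMap.toContinuousLinearMap
        (Matrix.toEuclideanLin (hessWW ℓ f x y (pairWV 0 V)))).le_opNorm w0
    rw [hw0n] at h1 h2
    simp only [one_mul, mul_one] at h1 h2
    linarith
  have hQK : Q ≤ K := le_trans (le_abs_self Q) hQb
  have key : ∀ t : ℝ, lam * (1 + t^2 * ‖m‖^2) ≤ Q - 2*t*‖m‖^2 := fun t =>
    lam_key ℓ f x y V hdiff hdiff2 w0 hw0n t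
  set s := ‖m‖^2 with hs
  have hs0 : 0 ≤ s := sq_nonneg _
  have halg : s ≤ |lam| * K + lam ^ 2 := by
    rcases eq_or_lt_of_le hs0 with h0 | hspos
    · rw [← h0]
      positivity
    · have hlamneg : lam < 0 := by
        by_contra hge
        push_neg at hge
        have hk := key ((K + 1) / (2 * s))
        have ht : 2 * ((K + 1) / (2 * s)) * s = K + 1 := by field_simp
        nlinarith [mul_nonneg hge (by positivity : (0:ℝ) ≤ 1 + ((K+1)/(2*s))^2 * s)]
      have hlne : lam ≠ 0 := ne_of_lt hlamneg
      have hk := key (-lam⁻¹)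
      have e1 : lam * (lam * (1 + (-lam⁻¹) ^ 2 * s)) = lam ^ 2 + s := by
        field_simp
      have e2 : lam * (Q - 2 * (-lam⁻¹) * s) = lam * Q + 2 * s := by
        field_simp
        ring
      have h3 : lam * (Q - 2 * (-lam⁻¹) * s) ≤ lam * (lam * (1 + (-lam⁻¹) ^ 2 * s)) :=
        mul_le_mul_of_nonpos_left hk (le_of_lt hlamneg)
      rw [e1, e2] at h3
      have h4 : (-lam) * Q ≤ (-lam) * K := mul_le_mul_of_nonneg_left hQK (by linarith)
      rw [abs_of_neg hlamneg]
      nlinarith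
  have hmle : ‖m‖ ≤ Real.sqrt (|lam| * K + lam ^ 2) := by
    have h5 : ‖m‖ = Real.sqrt s := by rw [hs, Real.sqrt_sq (norm_nonneg m)]
    rw [h5]
    exact Real.sqrt_le_sqrt halg
  have hconvle : netObj ℓ f x y (pairWV 0 V) - linObj ℓ x y u ≤
      -((1/(n:ℝ)) * ∑ i, deriv (fun p => ℓ p (y i)) 0 * (∑ j, u j * x i j)) := by
    have h1 : ∀ i : Fin n, ℓ 0 (y i) - ℓ (∑ j, u j * x i j) (y i)
        + deriv (fun p => ℓ p (y i)) 0 * (∑ j, u j * x i j) ≤ 0 := by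
      intro i
      have := tangent_le (fun p => ℓ p (y i)) (hconv (y i)) (hdiff (y i)) (∑ j, u j * x i j)
      linarith
    have hsum := Finset.sum_nonpos (fun i (_ : i ∈ Finset.univ) => h1 i)
    rw [Finset.sum_add_distrib, Finset.sum_sub_distrib] at hsum
    have hn0 : (0:ℝ) ≤ 1 / (n:ℝ) := by positivity
    have hneq : netObj ℓ f x y (pairWV 0 V) = (1/(n:ℝ)) * ∑ i, ℓ 0 (y i) := by
      have hrfl : netObj ℓ f x y (pairWV 0 V) = (1/(n:ℝ)) *
          ∑ i, ℓ (Pq (fun j => x i j) (fun l => f (x i) l) (pairWV 0 V)) (y i) := rfl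
      rw [hrfl]
      congr 1
      exact Finset.sum_congr rfl fun i _ => by rw [Pq_pair_zero]
    rw [hneq, linObj]
    nlinarith [mul_le_mul_of_nonneg_left hsum hn0]
  have hfd := fderiv_netObj_pair ℓ f x y V hdiff u
  have hsplit2 : ∑ j, u j * (∑ l, V j l * Mval ℓ f x y l)
      = (1/(n:ℝ)) * ∑ i, deriv (fun p => ℓ p (y i)) 0 *
          (∑ j, u j * (∑ l, V j l * f (x i) l)) := by
    simp only [Mval, Finset.mul_sum]
    conv_rhs => rw [Finset.sum_comm]
    refine Finset.sum_congr rfl fun j _ => ?_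
    rw [Finset.sum_comm]
    exact Finset.sum_congr rfl fun i _ => Finset.sum_congr rfl fun l _ => by ring
  have hdist : (1/(n:ℝ)) * ∑ i, deriv (fun p => ℓ p (y i)) 0 *
      (∑ j, u j * (x i j + ∑ l, V j l * f (x i) l))
      = (1/(n:ℝ)) * ∑ i, deriv (fun p => ℓ p (y i)) 0 * (∑ j, u j * x i j)
        + (1/(n:ℝ)) * ∑ i, deriv (fun p => ℓ p (y i)) 0 *
            (∑ j, u j * (∑ l, V j l * f (x i) l)) := by
    rw [← mul_add, ← Finset.sum_add_distrib]
    congr 1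
    refine Finset.sum_congr rfl fun i _ => ?_
    rw [← mul_add, ← Finset.sum_add_distrib]
    congr 1
    exact Finset.sum_congr rfl fun j _ => by ring
  have hVm : ∑ j, u j * (∑ l, V j l * Mval ℓ f x y l) ≤ matSpectralNorm V * ‖m‖ * ‖u‖ := by
    have h0 : ∑ j, u j * (∑ l, V j l * Mval ℓ f x y l) = ⟪Matrix.toEuclideanLin V m, u⟫ := by
      rw [inner_coord]
      refine Finset.sum_congr rfl fun j _ => ?_
      rw [toEuclideanLin_coord']
      have hml : ∀ l, m l = Mval ℓ f x y l := fun l => rfl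
      simp only [hml]
      ring
    rw [h0]
    have h1 : ⟪Matrix.toEuclideanLin V m, u⟫ ≤ ‖Matrix.toEuclideanLin V m‖ * ‖u‖ :=
      real_inner_le_norm _ _
    have h2 : ‖Matrix.toEuclideanLin V m‖ ≤ matSpectralNorm V * ‖m‖ :=
      (LinearMap.toContinuousLinearMap (Matrix.toEuclideanLin V)).le_opNorm m
    exact h1.trans (mul_le_mul_of_nonneg_right h2 (norm_nonneg u))
  have hgrad : -(fderiv ℝ (netObj ℓ f x y) (pairWV 0 V)
        (pairWV u (0 : Matrix (Fin d) (Fin k) ℝ))) ≤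
      ‖gradient (netObj ℓ f x y) (pairWV 0 V)‖ * ‖u‖ := by
    have h1 := inner_gradient_eq_fderiv (netObj ℓ f x y) (pairWV 0 V)
      (pairWV u (0 : Matrix (Fin d) (Fin k) ℝ))
    have h2 : |⟪gradient (netObj ℓ f x y) (pairWV 0 V),
          pairWV u (0 : Matrix (Fin d) (Fin k) ℝ)⟫|
        ≤ ‖gradient (netObj ℓ f x y) (pairWV 0 V)‖ *
          ‖pairWV u (0 : Matrix (Fin d) (Fin k) ℝ)‖ :=
      abs_real_inner_le_norm _ _
    rw [norm_pairWV_left, h1] at h2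
    have h3 := neg_abs_le (fderiv ℝ (netObj ℓ f x y) (pairWV 0 V)
      (pairWV u (0 : Matrix (Fin d) (Fin k) ℝ)))
    linarith
  rw [ge_iff_le, div_le_iff₀ hu']
  calc netObj ℓ f x y (pairWV 0 V) - linObj ℓ x y u
      ≤ -((1/(n:ℝ)) * ∑ i, deriv (fun p => ℓ p (y i)) 0 * (∑ j, u j * x i j)) := hconvle
    _ = -(fderiv ℝ (netObj ℓ f x y) (pairWV 0 V) (pairWV u (0 : Matrix (Fin d) (Fin k) ℝ)))
        + ∑ j, u j * (∑ l, V j l * Mval ℓ f x y l) := by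
        rw [hfd, hdist, hsplit2]
        ring
    _ ≤ ‖gradient (netObj ℓ f x y) (pairWV 0 V)‖ * ‖u‖ + matSpectralNorm V * ‖m‖ * ‖u‖ :=
        add_le_add hgrad hVm
    _ ≤ (‖gradient (netObj ℓ f x y) (pairWV 0 V)‖ +
          matSpectralNorm V * Real.sqrt (|lam| * K + lam ^ 2)) * ‖u‖ := by
        have h6 : matSpectralNorm V * ‖m‖ ≤ matSpectralNorm V * Real.sqrt (|lam| * K + lam ^ 2) :=
          mul_le_mul_of_nonneg_left hmle (norm_nonneg _)
        rw [add_mul]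
        exact add_le_add le_rfl (mul_le_mul_of_nonneg_right h6 hu'.le)

end
end

section
/- Fix w ∈ ℝ^d with w ≠ 0, V ∈ ℝ^{d×k}, and u ∈ ℝ^d. Define the matrix G = ( w − u ; (1/‖w‖²)·w uᵀ V ), i.e. the concatenation of the vector w − u and the d×k matrix (1/‖w‖²)·w uᵀ V. Let F(w,V) = (1/n)·Σ_{i=1}^n ℓ(wᵀ(x_i + V f(x_i)); y_i) and F_lin(u) = (1/n)·Σ_{i=1}^n ℓ(uᵀx_i; y_i), with ℓ(·;y) differentiable and convex in its first argument. Then ⟨vec(G), ∇F(w,V)⟩ ≥ F(w,V) − F_lin(u), where ∇F(w,V) is the gradient of F with respect to the concatenated vector (w, vec(V)). -/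
open scoped RealInnerProductSpace
open Finset

noncomputable section

/-- First-order condition for convex differentiable functions on `ℝ`. -/
lemma convex_first_order {φ : ℝ → ℝ} (hc : ConvexOn ℝ Set.univ φ)
    (hd : Differentiable ℝ φ) (a b : ℝ) : φ a - φ b ≤ deriv φ a * (a - b) := by
  rcases lt_trichotomy a b with h | h | h
  · have h1 := hc.deriv_le_slope (Set.mem_univ a) (Set.mem_univ b) h (hd a)
    rw [slope_def_field] at h1
    have hb : (0:ℝ) < b - a := sub_pos.mpr h
    have h2 := (le_div_iff₀ hb).mp h1
    nlinarith
  · simp [h]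
  · have h1 := hc.slope_le_deriv (Set.mem_univ b) (Set.mem_univ a) h (hd a)
    rw [slope_def_field] at h1
    have hb : (0:ℝ) < a - b := sub_pos.mpr h
    have h2 := (div_le_iff₀ hb).mp h1
    nlinarith

/-- The derivative (as a continuous linear map) of `z ↦ zᵂᵀ(xᵢ + zⱽ f(xᵢ))` at `z₀`. -/
def LA {d k : ℕ} (xi : Vec d) (fi : Vec k) (z₀ : Param d k) : Param d k →L[ℝ] ℝ :=
  ∑ j, (z₀ (Sum.inl j) • (∑ l, fi l • (EuclideanSpace.proj (Sum.inr (j, l)) : Param d k →L[ℝ] ℝ))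
      + (xi j + ∑ l, z₀ (Sum.inr (j, l)) * fi l) •
          (EuclideanSpace.proj (Sum.inl j) : Param d k →L[ℝ] ℝ))

lemma hasFDerivAt_A {d k : ℕ} (xi : Vec d) (fi : Vec k) (z₀ : Param d k) :
    HasFDerivAt
      (fun z : Param d k => ∑ j, z (Sum.inl j) * (xi j + ∑ l, z (Sum.inr (j, l)) * fi l))
      (LA xi fi z₀) z₀ := by
  apply HasFDerivAt.fun_sum
  intro j _
  have h1 : HasFDerivAt (fun z : Param d k => z (Sum.inl j))
      (EuclideanSpace.proj (Sum.inl j) : Param d k →L[ℝ] ℝ) z₀ :=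
    (EuclideanSpace.proj (Sum.inl j) : Param d k →L[ℝ] ℝ).hasFDerivAt
  have h2 : HasFDerivAt (fun z : Param d k => xi j + ∑ l, z (Sum.inr (j, l)) * fi l)
      (∑ l, fi l • (EuclideanSpace.proj (Sum.inr (j, l)) : Param d k →L[ℝ] ℝ)) z₀ := by
    simpa using (hasFDerivAt_const (xi j) z₀).fun_add
      (HasFDerivAt.fun_sum (u := Finset.univ) (fun l _ =>
        ((EuclideanSpace.proj (Sum.inr (j, l)) : Param d k →L[ℝ] ℝ).hasFDerivAt.mul_const (fi l))))
  exact h1.mul h2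

lemma LA_apply {d k : ℕ} (xi : Vec d) (fi : Vec k) (z₀ G : Param d k) :
    LA xi fi z₀ G = ∑ j, (z₀ (Sum.inl j) * ∑ l, fi l * G (Sum.inr (j, l))
      + (xi j + ∑ l, z₀ (Sum.inr (j, l)) * fi l) * G (Sum.inl j)) := by
  simp [LA, ContinuousLinearMap.sum_apply, Finset.mul_sum]

/-- Lemma 1 of the paper: `⟨vec(G), ∇F(w,V)⟩ ≥ F(w,V) − F_lin(u)` where
`G = (w − u ; ‖w‖⁻²·w uᵀ V)`. -/
theorem inner_vecG_gradient_ge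
    {d k n : ℕ} (ℓ : ℝ → ℝ → ℝ) (f : Vec d → Vec k)
    (x : Fin n → Vec d) (y : Fin n → ℝ)
    (hconv : ∀ y₀ : ℝ, ConvexOn ℝ Set.univ fun p => ℓ p y₀)
    (hdiff : ∀ y₀ : ℝ, Differentiable ℝ fun p => ℓ p y₀)
    (w : Vec d) (hw : w ≠ 0) (V : Matrix (Fin d) (Fin k) ℝ) (u : Vec d) :
    ⟪pairWV (w - u) ((‖w‖ ^ 2)⁻¹ • (Matrix.vecMulVec (fun i => w i) (fun i => u i) * V)),
        gradient (netObj ℓ f x y) (pairWV w V)⟫ ≥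
      netObj ℓ f x y (pairWV w V) - linObj ℓ x y u := by
  classical
  set z₀ : Param d k := pairWV w V with hz₀
  set G : Param d k := pairWV (w - u)
      ((‖w‖ ^ 2)⁻¹ • (Matrix.vecMulVec (fun i => w i) (fun i => u i) * V)) with hGdef
  -- coordinates
  have hz₀l : ∀ j, z₀ (Sum.inl j) = w j := fun j => rfl
  have hz₀r : ∀ j l, z₀ (Sum.inr (j, l)) = V j l := fun j l => rfl
  have hGl : ∀ j, G (Sum.inl j) = w j - u j := fun j => rfl
  have hGr : ∀ j l, G (Sum.inr (j, l)) = (‖w‖ ^ 2)⁻¹ * ∑ m, w j * u m * V m l := by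
    intro j l
    show ((‖w‖ ^ 2)⁻¹ • (Matrix.vecMulVec (fun i => w i) (fun i => u i) * V)) j l = _
    simp [Matrix.mul_apply, Matrix.vecMulVec_apply, Finset.mul_sum, mul_assoc]
  -- the key scalars
  set a : Fin n → ℝ := fun i => ∑ j, w j * ((x i) j + ∑ l, V j l * (f (x i)) l) with ha
  set b : Fin n → ℝ := fun i => ∑ j, u j * (x i) j with hb
  set dl : Fin n → ℝ := fun i => deriv (fun p => ℓ p (y i)) (a i) with hdl
  -- total derivative
  set D : Param d k →L[ℝ] ℝ := (1 / (n : ℝ)) • ∑ i, dl i • LA (x i) (f (x i)) z₀ with hD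
  have hAeq : ∀ i, (∑ j, z₀ (Sum.inl j) * ((x i) j + ∑ l, z₀ (Sum.inr (j, l)) * (f (x i)) l))
      = a i := fun i => rfl
  have hFi : ∀ i, HasFDerivAt
      (fun z : Param d k =>
        ℓ (∑ j, z (Sum.inl j) * ((x i) j + ∑ l, z (Sum.inr (j, l)) * (f (x i)) l)) (y i))
      (dl i • LA (x i) (f (x i)) z₀) z₀ := by
    intro i
    have hder : HasDerivAt (fun p => ℓ p (y i)) (dl i) (a i) :=
      ((hdiff (y i)) (a i)).hasDerivAt
    exact hder.comp_hasFDerivAt_of_eq z₀ (hasFDerivAt_A (x i) (f (x i)) z₀) (hAeq i).symm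
  have Htot : HasFDerivAt (netObj ℓ f x y) D z₀ :=
    (HasFDerivAt.fun_sum (u := Finset.univ) (fun i _ => hFi i)).const_mul (1 / (n : ℝ))
  have hgrad : HasGradientAt (netObj ℓ f x y) ((InnerProductSpace.toDual ℝ (Param d k)).symm D) z₀ := by
    rw [hasGradientAt_iff_hasFDerivAt]
    simpa using Htot
  rw [hgrad.gradient, real_inner_comm, InnerProductSpace.toDual_symm_apply]
  -- norm identity
  have hnorm : ‖w‖ ^ 2 = ∑ j, w j * w j := by
    rw [EuclideanSpace.norm_eq, Real.sq_sqrt (by positivity)]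
    exact Finset.sum_congr rfl fun j _ => by rw [Real.norm_eq_abs, sq_abs, sq]
  have hwne : (‖w‖ : ℝ) ^ 2 ≠ 0 := pow_ne_zero _ (norm_ne_zero_iff.mpr hw)
  -- compute LA applied to G
  have hsum : ∀ (j : Fin d) (l : Fin k), (∑ m, w j * u m * V m l) = w j * ∑ m, u m * V m l := by
    intro j l
    rw [Finset.mul_sum]
    exact Finset.sum_congr rfl fun m _ => by ring
  have key : ∀ i, LA (x i) (f (x i)) z₀ G = a i - b i := by
    intro i
    set s : ℝ := (‖w‖ ^ 2)⁻¹ with hs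
    set T : ℝ := ∑ l, f (x i) l * ∑ m, u m * V m l with hT
    have h1 : ∀ j, z₀ (Sum.inl j) * ∑ l, (f (x i)) l * G (Sum.inr (j, l))
        = (w j * w j) * (s * T) := by
      intro j
      have hl : ∀ l, f (x i) l * G (Sum.inr (j, l))
          = (w j * s) * (f (x i) l * ∑ m, u m * V m l) := by
        intro l
        rw [hGr j l, hsum j l]
        ring
      rw [hz₀l, Finset.sum_congr rfl fun l _ => hl l, ← Finset.mul_sum, ← hT]
      ring
    have hT' : (∑ j, ∑ l, u j * (V j l * f (x i) l)) = T := by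
      rw [Finset.sum_comm, hT]
      refine Finset.sum_congr rfl fun l _ => ?_
      rw [Finset.mul_sum]
      exact Finset.sum_congr rfl fun m _ => by ring
    have h2 : (∑ j, ((x i) j + ∑ l, V j l * f (x i) l) * (w j - u j))
        = (a i - b i) - T := by
      have expand : ∀ j, ((x i) j + ∑ l, V j l * f (x i) l) * (w j - u j)
          = w j * ((x i) j + ∑ l, V j l * f (x i) l) - u j * (x i) j
            - ∑ l, u j * (V j l * f (x i) l) := by
        intro j
        rw [← Finset.mul_sum]
        ring
      rw [Finset.sum_congr rfl fun j _ => expand j, Finset.sum_sub_distrib,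
        Finset.sum_sub_distrib, hT', ha, hb]
    rw [LA_apply]
    calc (∑ j, (z₀ (Sum.inl j) * ∑ l, (f (x i)) l * G (Sum.inr (j, l))
            + ((x i) j + ∑ l, z₀ (Sum.inr (j, l)) * f (x i) l) * G (Sum.inl j)))
        = (∑ j, (w j * w j) * (s * T))
            + ∑ j, ((x i) j + ∑ l, V j l * f (x i) l) * (w j - u j) := by
          rw [Finset.sum_add_distrib]
          exact congrArg₂ (· + ·) (Finset.sum_congr rfl fun j _ => h1 j)
            (Finset.sum_congr rfl fun j _ => by rw [hGl j]; simp only [hz₀r])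
      _ = (∑ j, w j * w j) * (s * T) + ((a i - b i) - T) := by
          rw [← Finset.sum_mul, h2]
      _ = T + ((a i - b i) - T) := by
          rw [← hnorm, hs, ← mul_assoc, mul_inv_cancel₀ hwne, one_mul]
      _ = a i - b i := by ring
  have hDG : D G = (1 / (n : ℝ)) * ∑ i, dl i * (a i - b i) := by
    show ((1 / (n : ℝ)) • ∑ i, dl i • LA (x i) (f (x i)) z₀) G = _
    rw [ContinuousLinearMap.smul_apply, ContinuousLinearMap.sum_apply]
    simp only [ContinuousLinearMap.smul_apply, smul_eq_mul, key]
  have hnet : netObj ℓ f x y z₀ = (1 / (n : ℝ)) * ∑ i, ℓ (a i) (y i) := rfl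
  have hlin : linObj ℓ x y u = (1 / (n : ℝ)) * ∑ i, ℓ (b i) (y i) := rfl
  rw [hDG, hnet, hlin, ← mul_sub, ← Finset.sum_sub_distrib]
  refine mul_le_mul_of_nonneg_left (Finset.sum_le_sum fun i _ => ?_) (by positivity)
  exact convex_first_order (hconv (y i)) (hdiff (y i)) (a i) (b i)

end
end

section
/- Let F(w,V) = (1/n)·Σ_{i=1}^n ℓ(wᵀ(x_i + V f(x_i)); y_i) with ℓ(·;y) twice differentiable, and define r := (1/n)·Σ_{i=1}^n ℓ'(0; y_i)·f(x_i) ∈ ℝ^k. Then for every V ∈ ℝ^{d×k}, at the point w = 0: (i) the block of second partial derivatives of F with respect to the entries of V vanishes, i.e. ∂²F/∂V_{i,j}∂V_{i',j'}(0,V) = 0 for all i,j,i',j'; and (ii) for each coordinate index i of w, the matrix of mixed second partial derivatives satisfies ∂²F/∂w_i∂V(0,V) = e_i rᵀ, where e_i ∈ ℝ^d is the i-th standard basis vector. -/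
open scoped RealInnerProductSpace
open Finset

noncomputable section

/-- The vector `r = (1/n)·Σᵢ ℓ'(0; yᵢ)·f(xᵢ) ∈ ℝ^k`. -/
def rVec {d k n : ℕ} (ℓ : ℝ → ℝ → ℝ) (f : Vec d → Vec k)
    (x : Fin n → Vec d) (y : Fin n → ℝ) : Vec k :=
  (1 / (n : ℝ)) • ∑ i, deriv (fun p => ℓ p (y i)) 0 • f (x i)

namespace Stmt13

variable {d k n : ℕ} (ℓ : ℝ → ℝ → ℝ) (f : Vec d → Vec k) (x : Fin n → Vec d) (y : Fin n → ℝ)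

/-- `gF i z = wᵀ(xᵢ + V f(xᵢ))` in coordinates. -/
def gF (i : Fin n) (z : Param d k) : ℝ :=
  ∑ j, z (Sum.inl j) * ((x i) j + ∑ l, z (Sum.inr (j, l)) * (f (x i)) l)

def Bm (i : Fin n) (j : Fin d) : Param d k →L[ℝ] ℝ :=
  ∑ l, (f (x i)) l • EuclideanSpace.proj (Sum.inr (j, l))

lemma Bm_apply (i : Fin n) (j : Fin d) (u : Param d k) :
    Bm f x i j u = ∑ l, (f (x i)) l * u (Sum.inr (j, l)) := by
  simp [Bm]

def DgL (i : Fin n) (z : Param d k) : Param d k →L[ℝ] ℝ :=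
  ∑ j, (z (Sum.inl j) • Bm f x i j +
    ((x i) j + ∑ l, z (Sum.inr (j, l)) * (f (x i)) l) • EuclideanSpace.proj (Sum.inl j))

lemma DgL_apply (i : Fin n) (z u : Param d k) :
    DgL f x i z u = ∑ j, (z (Sum.inl j) * Bm f x i j u +
      ((x i) j + ∑ l, z (Sum.inr (j, l)) * (f (x i)) l) * u (Sum.inl j)) := by
  simp [DgL]

lemma hasFDerivAt_linpart (i : Fin n) (j : Fin d) (z : Param d k) :
    HasFDerivAt (fun z : Param d k => ∑ l, z (Sum.inr (j, l)) * (f (x i)) l)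
      (Bm f x i j) z := by
  unfold Bm
  apply HasFDerivAt.fun_sum
  intro l _
  exact (EuclideanSpace.proj (𝕜 := ℝ) (Sum.inr (j, l) : Fin d ⊕ Fin d × Fin k)).hasFDerivAt.mul_const _

lemma hasFDerivAt_gF (i : Fin n) (z : Param d k) :
    HasFDerivAt (gF f x i) (DgL f x i z) z := by
  unfold gF DgL
  apply HasFDerivAt.fun_sum
  intro j _
  exact (EuclideanSpace.proj (𝕜 := ℝ) (Sum.inl j : Fin d ⊕ Fin d × Fin k)).hasFDerivAt.mul
    ((hasFDerivAt_linpart f x i j z).const_add _)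

def DFL (z : Param d k) : Param d k →L[ℝ] ℝ :=
  (1 / (n : ℝ)) • ∑ i, deriv (fun p => ℓ p (y i)) (gF f x i z) • DgL f x i z

lemma hasFDerivAt_netObj (hdiff : ∀ y₀ : ℝ, Differentiable ℝ fun p => ℓ p y₀) (z : Param d k) :
    HasFDerivAt (netObj ℓ f x y) (DFL ℓ f x y z) z := by
  unfold netObj DFL
  exact (HasFDerivAt.fun_sum fun i _ =>
    ((hdiff (y i) (gF f x i z)).hasDerivAt).comp_hasFDerivAt z
      (hasFDerivAt_gF f x i z)).const_mul _

lemma fderiv_netObj_apply (hdiff : ∀ y₀ : ℝ, Differentiable ℝ fun p => ℓ p y₀)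
    (v u : Param d k) :
    fderiv ℝ (netObj ℓ f x y) v u =
      (1 / (n : ℝ)) * ∑ i, deriv (fun p => ℓ p (y i)) (gF f x i v) * DgL f x i v u := by
  rw [(hasFDerivAt_netObj ℓ f x y hdiff v).fderiv]
  simp [DFL, mul_comm]

def ML (i : Fin n) (u : Param d k) : Param d k →L[ℝ] ℝ :=
  ∑ j, ((Bm f x i j u) • EuclideanSpace.proj (Sum.inl j) + (u (Sum.inl j)) • Bm f x i j)

lemma hasFDerivAt_DgApp (i : Fin n) (u z : Param d k) :
    HasFDerivAt (fun v => DgL f x i v u) (ML f x i u) z := by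
  have h : (fun v => DgL f x i v u) = fun v => ∑ j, (v (Sum.inl j) * Bm f x i j u +
      ((x i) j + ∑ l, v (Sum.inr (j, l)) * (f (x i)) l) * u (Sum.inl j)) :=
    funext fun v => DgL_apply f x i v u
  rw [h]; unfold ML
  apply HasFDerivAt.fun_sum
  intro j _
  exact ((EuclideanSpace.proj (𝕜 := ℝ) (Sum.inl j : Fin d ⊕ Fin d × Fin k)).hasFDerivAt.mul_const
    _).add (((hasFDerivAt_linpart f x i j z).const_add _).mul_const _)

def D2L (u z : Param d k) : Param d k →L[ℝ] ℝ :=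
  (1 / (n : ℝ)) • ∑ i,
    (deriv (fun p => ℓ p (y i)) (gF f x i z) • ML f x i u +
      (DgL f x i z u) • (deriv (deriv fun p => ℓ p (y i)) (gF f x i z) • DgL f x i z))

lemma hasFDerivAt_phi (hdiff : ∀ y₀ : ℝ, Differentiable ℝ fun p => ℓ p y₀)
    (hdiff2 : ∀ y₀ : ℝ, Differentiable ℝ (deriv fun p => ℓ p y₀)) (u z : Param d k) :
    HasFDerivAt (fun v => fderiv ℝ (netObj ℓ f x y) v u) (D2L ℓ f x y u z) z := by
  have h : (fun v => fderiv ℝ (netObj ℓ f x y) v u) =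
      fun v => (1 / (n : ℝ)) * ∑ i, deriv (fun p => ℓ p (y i)) (gF f x i v) * DgL f x i v u :=
    funext fun v => fderiv_netObj_apply ℓ f x y hdiff v u
  rw [h]; unfold D2L
  refine HasFDerivAt.const_mul (HasFDerivAt.fun_sum fun i _ => ?_) _
  exact (((hdiff2 (y i) (gF f x i z)).hasDerivAt).comp_hasFDerivAt z
    (hasFDerivAt_gF f x i z)).mul (hasFDerivAt_DgApp f x i u z)

lemma sum_smul_apply {k n : ℕ} (c : Fin n → ℝ) (v : Fin n → Vec k) (l : Fin k) :
    (∑ i, c i • v i) l = ∑ i, c i * v i l := by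
  induction (Finset.univ : Finset (Fin n)) using Finset.induction with
  | empty => simp
  | insert _ _ h ih => rw [Finset.sum_insert h, Finset.sum_insert h, ← ih]; rfl

lemma rVec_apply (l : Fin k) :
    rVec ℓ f x y l = (1 / (n : ℝ)) * ∑ i, deriv (fun p => ℓ p (y i)) 0 * (f (x i)) l := by
  show ((1 / (n : ℝ)) • (∑ i, deriv (fun p => ℓ p (y i)) 0 • f (x i) : Vec k)) l = _
  rw [PiLp.smul_apply, sum_smul_apply, smul_eq_mul]

end Stmt13

/-- at `w = 0`, (i) the `V`-by-`V` block of second partial derivatives of `F`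
vanishes, and (ii) the mixed second partials satisfy `∂²F/∂wᵢ∂V(0,V) = eᵢ rᵀ`. -/
theorem hessian_blocks_at_zero
    {d k n : ℕ} (ℓ : ℝ → ℝ → ℝ) (f : Vec d → Vec k)
    (x : Fin n → Vec d) (y : Fin n → ℝ)
    (hdiff : ∀ y₀ : ℝ, Differentiable ℝ fun p => ℓ p y₀)
    (hdiff2 : ∀ y₀ : ℝ, Differentiable ℝ (deriv fun p => ℓ p y₀))
    (V : Matrix (Fin d) (Fin k) ℝ) :
    (∀ (i : Fin d) (j : Fin k) (i' : Fin d) (j' : Fin k),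
        hessianMatrix (netObj ℓ f x y) (pairWV 0 V) (Sum.inr (i, j)) (Sum.inr (i', j')) = 0) ∧
      (∀ (i : Fin d) (j : Fin d) (l : Fin k),
        hessianMatrix (netObj ℓ f x y) (pairWV 0 V) (Sum.inl i) (Sum.inr (j, l)) =
          if i = j then rVec ℓ f x y l else 0) := by
  have hz0l : ∀ j : Fin d, pairWV (0 : Vec d) V (Sum.inl j) = 0 := fun j => rfl
  have hz0r : ∀ p : Fin d × Fin k, pairWV (0 : Vec d) V (Sum.inr p) = V p.1 p.2 := fun p => rfl
  have hg0 : ∀ i : Fin n, Stmt13.gF f x i (pairWV 0 V) = 0 := by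
    intro i; simp [Stmt13.gF, hz0l]
  constructor
  · intro i j i' j'
    show fderiv ℝ (fun v => fderiv ℝ (netObj ℓ f x y) v
        (EuclideanSpace.single (Sum.inr (i', j')) 1)) (pairWV 0 V)
        (EuclideanSpace.single (Sum.inr (i, j)) 1) = 0
    rw [(Stmt13.hasFDerivAt_phi ℓ f x y hdiff hdiff2 _ _).fderiv]
    simp [Stmt13.D2L, Stmt13.ML, Stmt13.DgL_apply, Stmt13.Bm_apply, hz0l, hg0]
  · intro i j l
    show fderiv ℝ (fun v => fderiv ℝ (netObj ℓ f x y) v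
        (EuclideanSpace.single (Sum.inr (j, l)) 1)) (pairWV 0 V)
        (EuclideanSpace.single (Sum.inl i) 1) =
        if i = j then rVec ℓ f x y l else 0
    rw [(Stmt13.hasFDerivAt_phi ℓ f x y hdiff hdiff2 _ _).fderiv]
    simp [Stmt13.D2L, Stmt13.ML, Stmt13.DgL_apply, Stmt13.Bm_apply, hz0l, hg0,
      Stmt13.rVec_apply, Finset.mul_sum]
    rcases eq_or_ne i j with h | h <;> simp [h]

end
end

section
/- Let F(w,V) = (1/n)·Σ_{i=1}^n ℓ(wᵀ(x_i + V f(x_i)); y_i) with ℓ(·;y) differentiable and convex, F_lin(u) = (1/n)·Σ_{i=1}^n ℓ(uᵀx_i; y_i), and r := (1/n)·Σ_{i=1}^n ℓ'(0; y_i)·f(x_i). Then for every V ∈ ℝ^{d×k}: ‖∇F(0,V)‖ + ‖V‖·‖r‖ ≥ ‖∇F_lin(0)‖, where ∇F(0,V) is the gradient of F with respect to (w, vec(V)) at w = 0 (Euclidean norm), ‖V‖ is the spectral norm, and ‖r‖, ‖∇F_lin(0)‖ are Euclidean norms. -/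
open scoped RealInnerProductSpace
open Finset

noncomputable section

/-- Apply a finite sum of Euclidean vectors at a coordinate. -/
lemma euc_sum_apply {ι : Type*} {α : Type*} (s : Finset α)
    (v : α → EuclideanSpace ℝ ι) (i : ι) :
    (∑ a ∈ s, v a) i = ∑ a ∈ s, v a i := by
  classical
  induction s using Finset.induction with
  | empty => rfl
  | insert _ _ h ih => rw [Finset.sum_insert h, Finset.sum_insert h, PiLp.add_apply, ih]

lemma aux_grad {ι : Type*} [Fintype ι] {N : ℕ} (ℓ : ℝ → ℝ → ℝ)
    (hdiff : ∀ y₀ : ℝ, Differentiable ℝ fun p => ℓ p y₀)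
    (y : Fin N → ℝ) (ψ : Fin N → EuclideanSpace ℝ ι → ℝ) (a : Fin N → EuclideanSpace ℝ ι)
    (z0 : EuclideanSpace ℝ ι)
    (hψ : ∀ i, HasFDerivAt (ψ i) (innerSL ℝ (a i)) z0)
    (hz : ∀ i, ψ i z0 = 0) (c : ℝ) :
    HasGradientAt (fun z => c * ∑ i, ℓ (ψ i z) (y i))
      (c • ∑ i, deriv (fun p => ℓ p (y i)) 0 • a i) z0 := by
  rw [hasGradientAt_iff_hasFDerivAt]
  have h : HasFDerivAt (fun z => c * ∑ i, ℓ (ψ i z) (y i))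
      (c • ∑ i, deriv (fun p => ℓ p (y i)) 0 • innerSL ℝ (a i)) z0 := by
    apply HasFDerivAt.const_mul
    apply HasFDerivAt.fun_sum
    intro i _
    have hd : HasDerivAt (fun p => ℓ p (y i)) (deriv (fun p => ℓ p (y i)) 0) (ψ i z0) := by
      rw [hz i]; exact ((hdiff (y i)) 0).hasDerivAt
    exact hd.comp_hasFDerivAt z0 (hψ i)
  refine h.congr_fderiv ?_
  ext z
  simp [InnerProductSpace.toDual_apply_apply, sum_inner, real_inner_smul_left, inner_smul_left]

lemma norm_pairWV_zero {d k : ℕ} (w : Vec d) :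
    ‖pairWV w (0 : Matrix (Fin d) (Fin k) ℝ)‖ = ‖w‖ := by
  simp only [EuclideanSpace.norm_eq]
  congr 1
  rw [Fintype.sum_sum_type]
  simp [pairWV_inl, pairWV_inr]

lemma scalar_id {n k : ℕ} (c : ℝ) (D : Fin n → ℝ) (X : Fin n → ℝ)
    (Vr : Fin k → ℝ) (Fv : Fin n → Fin k → ℝ) :
    c * ∑ i, D i * (X i + ∑ l, Vr l * Fv i l)
      = c * ∑ i, D i * X i + ∑ l, Vr l * (c * ∑ i, D i * Fv i l) := by
  simp only [mul_add, Finset.sum_add_distrib, Finset.mul_sum]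
  congr 1
  rw [Finset.sum_comm]
  exact Finset.sum_congr rfl fun l _ => Finset.sum_congr rfl fun i _ => by ring

/-- `‖∇F(0,V)‖ + ‖V‖·‖r‖ ≥ ‖∇F_lin(0)‖`. -/
theorem grad_at_zero_triangle_bound
    {d k n : ℕ} (ℓ : ℝ → ℝ → ℝ) (f : Vec d → Vec k)
    (x : Fin n → Vec d) (y : Fin n → ℝ)
    (hconv : ∀ y₀ : ℝ, ConvexOn ℝ Set.univ fun p => ℓ p y₀)
    (hdiff : ∀ y₀ : ℝ, Differentiable ℝ fun p => ℓ p y₀)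
    (V : Matrix (Fin d) (Fin k) ℝ) :
    ‖gradient (netObj ℓ f x y) (pairWV 0 V)‖ + matSpectralNorm V * ‖rVec ℓ f x y‖ ≥
      ‖gradient (linObj ℓ x y) 0‖ := by
  classical
  set c : ℝ := 1 / (n : ℝ) with hc
  set D : Fin n → ℝ := fun i => deriv (fun p => ℓ p (y i)) 0 with hD
  set b : Fin n → Vec d := fun i =>
    (EuclideanSpace.equiv (Fin d) ℝ).symm fun j => (x i) j + ∑ l, V j l * (f (x i)) l with hb
  set z0 : Param d k := pairWV 0 V with hz0
  have hz0l : ∀ j : Fin d, z0 (Sum.inl j) = 0 := fun j => rfl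
  have hz0r : ∀ p : Fin d × Fin k, z0 (Sum.inr p) = V p.1 p.2 := fun p => rfl
  have hbv : ∀ i j, b i j = (x i) j + ∑ l, V j l * (f (x i)) l := fun i j => rfl
  -- gradient of the linear objective
  have hlin : HasGradientAt (linObj ℓ x y) (c • ∑ i, D i • x i) (0 : Vec d) := by
    have := aux_grad ℓ hdiff y (fun i u => ∑ j, u j * (x i) j) x 0
      (fun i => by
        have h : HasFDerivAt (fun u : Vec d => ∑ j, u j * (x i) j)
            (∑ j, (x i) j • (EuclideanSpace.proj j : Vec d →L[ℝ] ℝ)) 0 := by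
          apply HasFDerivAt.fun_sum
          intro j _
          exact (EuclideanSpace.proj j : Vec d →L[ℝ] ℝ).hasFDerivAt.mul_const _
        refine h.congr_fderiv ?_
        ext u
        simp [PiLp.inner_apply, mul_comm])
      (fun i => by simp) c
    exact this
  -- gradient of the network objective
  have hnet : HasGradientAt (netObj ℓ f x y) (c • ∑ i, D i • pairWV (b i) 0) z0 := by
    have := aux_grad ℓ hdiff y
      (fun i z => ∑ j, z (Sum.inl j) * ((x i) j + ∑ l, z (Sum.inr (j, l)) * (f (x i)) l))
      (fun i => pairWV (b i) 0) z0
      (fun i => by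
        have hterm : ∀ j : Fin d, HasFDerivAt
            (fun z : Param d k => z (Sum.inl j) * ((x i) j + ∑ l, z (Sum.inr (j, l)) * (f (x i)) l))
            (z0 (Sum.inl j) • (∑ l, (f (x i)) l • (EuclideanSpace.proj (Sum.inr (j, l)) : Param d k →L[ℝ] ℝ))
              + ((x i) j + ∑ l, z0 (Sum.inr (j, l)) * (f (x i)) l) •
                  (EuclideanSpace.proj (Sum.inl j) : Param d k →L[ℝ] ℝ)) z0 := by
          intro j
          apply HasFDerivAt.mul
          · exact (EuclideanSpace.proj (Sum.inl j) : Param d k →L[ℝ] ℝ).hasFDerivAt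
          · apply HasFDerivAt.const_add
            apply HasFDerivAt.fun_sum
            intro l _
            exact (EuclideanSpace.proj (Sum.inr (j, l)) : Param d k →L[ℝ] ℝ).hasFDerivAt.mul_const _
        have h := HasFDerivAt.fun_sum (fun j (_ : j ∈ Finset.univ) => hterm j)
        refine h.congr_fderiv ?_
        ext z
        simp only [innerSL_apply_apply, PiLp.inner_apply, RCLike.inner_apply, starRingEnd_apply,
          star_trivial, Fintype.sum_sum_type, pairWV_inl, pairWV_inr,
          ContinuousLinearMap.sum_apply, ContinuousLinearMap.add_apply,
          ContinuousLinearMap.smul_apply, hz0l, hz0r,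
          zero_smul, zero_add, smul_eq_mul, hbv, Matrix.zero_apply, zero_mul,
          Finset.sum_const_zero, add_zero]
        simp [mul_comm]
      )
      (fun i => by simp [hz0l]) c
    exact this
  rw [hlin.gradient, hnet.gradient]
  set g : Vec d := c • ∑ i, D i • x i with hg
  set m : Vec d := (Matrix.toEuclideanLin V) (rVec ℓ f x y) with hm
  have hrl : ∀ l, (rVec ℓ f x y) l = c * ∑ i, D i * (f (x i)) l := by
    intro l
    simp only [rVec, ← hc, ← hD, PiLp.smul_apply, smul_eq_mul, euc_sum_apply]
    rfl
  have hGm : (c • ∑ i, D i • pairWV (b i) 0 : Param d k) = pairWV (g + m) 0 := by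
    refine PiLp.ext fun s => ?_
    cases s with
    | inl j =>
        have hmj : m j = ∑ l, V j l * (rVec ℓ f x y) l := by
          simp [hm, Matrix.toEuclideanLin_apply, Matrix.mulVec, dotProduct]
        simp only [PiLp.smul_apply, euc_sum_apply, smul_eq_mul, pairWV_inl, PiLp.add_apply,
          hg, hmj, hrl, hbv]
        exact scalar_id c D (fun i => (x i) j) (fun l => V j l) (fun i l => (f (x i)) l)
    | inr p =>
        simp only [PiLp.smul_apply, euc_sum_apply, smul_eq_mul, pairWV_inr, Matrix.zero_apply]
        simp
  rw [hGm, norm_pairWV_zero]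
  have hmn : ‖m‖ ≤ matSpectralNorm V * ‖rVec ℓ f x y‖ := by
    have := (LinearMap.toContinuousLinearMap (Matrix.toEuclideanLin V)).le_opNorm (rVec ℓ f x y)
    simpa [matSpectralNorm, hm] using this
  have htri : ‖g‖ ≤ ‖g + m‖ + ‖m‖ := by
    calc ‖g‖ = ‖(g + m) - m‖ := by rw [add_sub_cancel_right]
      _ ≤ ‖g + m‖ + ‖m‖ := norm_sub_le _ _
  linarith
end
end
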